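/- arXiv:1601.04737 — 4 statements merged into one kernel-verified Lean document; each statement's English description precedes it below -/
import Mathlib

section
/- Let β ∈ (0,1), 0 < ε < 1, and x ∈ ℝ^p. Let S be a finite sample of indices from {1,…,n} such that the sub-sampled Hessian H(x) satisfies λ_min(H(x)) ≥ (1−ε)γ, and set p = −H(x)⁻¹ ∇F(x). Then: (a) every step size α with 0 < α ≤ 2(1−β)(1−ε)/κ satisfies the Armijo condition F(x+αp) ≤ F(x) + αβ pᵀ∇F(x); and (b) for any α > 0 satisfying this Armijo condition, F(x+αp) − F(x*) ≤ (1 − 2αβ/κ̃)(F(x) − F(x*)). -/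
open scoped RealInnerProductSpace

/-- The Hessian of `F : ℝ^d → ℝ` at `x`, as a continuous linear map,
obtained as the (Fréchet) derivative of the gradient. -/
noncomputable def hess {d : ℕ} (F : EuclideanSpace ℝ (Fin d) → ℝ)
    (x : EuclideanSpace ℝ (Fin d)) :
    EuclideanSpace ℝ (Fin d) →L[ℝ] EuclideanSpace ℝ (Fin d) :=
  fderiv ℝ (gradient F) x

section Aux
variable {d : ℕ} {G : EuclideanSpace ℝ (Fin d) → ℝ}

lemma grad_eq (G : EuclideanSpace ℝ (Fin d) → ℝ) (y v : EuclideanSpace ℝ (Fin d)) :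
    ⟪gradient G y, v⟫ = fderiv ℝ G y v :=
  InnerProductSpace.toDual_symm_apply

lemma contDiff_gradient (hG : ContDiff ℝ 2 G) : ContDiff ℝ 1 (gradient G) := by
  have h1 : ContDiff ℝ 1 (fderiv ℝ G) := hG.fderiv_right (by norm_num)
  exact (LinearIsometryEquiv.contDiff
    (InnerProductSpace.toDual ℝ (EuclideanSpace ℝ (Fin d))).symm).comp h1

lemma hasFDerivAt_gradient (hG : ContDiff ℝ 2 G) (y : EuclideanSpace ℝ (Fin d)) :
    HasFDerivAt (gradient G) (hess G y) y :=
  (((contDiff_gradient hG).differentiable one_ne_zero) y).hasFDerivAt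


lemma hess_symm (hG : ContDiff ℝ 2 G) (y v w : EuclideanSpace ℝ (Fin d)) :
    ⟪hess G y v, w⟫ = ⟪hess G y w, v⟫ := by
  have hdg : Differentiable ℝ G := hG.differentiable (by norm_num)
  have h1 : ContDiff ℝ 1 (fderiv ℝ G) := hG.fderiv_right (by norm_num)
  have hx : HasFDerivAt (fderiv ℝ G) (fderiv ℝ (fderiv ℝ G) y) y :=
    ((h1.differentiable one_ne_zero) y).hasFDerivAt
  have hsym := second_derivative_symmetric (fun z => (hdg z).hasFDerivAt) hx v w
  have hc := LinearIsometryEquiv.comp_fderiv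
    (InnerProductSpace.toDual ℝ (EuclideanSpace ℝ (Fin d))).symm (𝕜 := ℝ)
    (f := fderiv ℝ G) (x := y)
  have h2 : hess G y = fderiv ℝ
      (⇑(InnerProductSpace.toDual ℝ (EuclideanSpace ℝ (Fin d))).symm ∘ fderiv ℝ G) y := rfl
  rw [h2, hc]
  show ⟪(InnerProductSpace.toDual ℝ (EuclideanSpace ℝ (Fin d))).symm
      ((fderiv ℝ (fderiv ℝ G) y) v), w⟫ =
    ⟪(InnerProductSpace.toDual ℝ (EuclideanSpace ℝ (Fin d))).symm
      ((fderiv ℝ (fderiv ℝ G) y) w), v⟫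
  rw [InnerProductSpace.toDual_symm_apply, InnerProductSpace.toDual_symm_apply, hsym]

lemma line_deriv1 (hG : ContDiff ℝ 2 G) (x v : EuclideanSpace ℝ (Fin d)) (t : ℝ) :
    HasDerivAt (fun t : ℝ => G (x + t • v)) ⟪gradient G (x + t • v), v⟫ t := by
  have hc : HasDerivAt (fun t : ℝ => x + t • v) v t := by
    simpa using ((hasDerivAt_id t).smul_const v).const_add x
  have hg : HasFDerivAt G (fderiv ℝ G (x + t • v)) (x + t • v) :=
    (hG.differentiable (by norm_num) _).hasFDerivAt
  have := hg.comp_hasDerivAt t hc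
  rw [grad_eq]
  exact this

lemma line_deriv2 (hG : ContDiff ℝ 2 G) (x v : EuclideanSpace ℝ (Fin d)) (t : ℝ) :
    HasDerivAt (fun t : ℝ => ⟪gradient G (x + t • v), v⟫) ⟪hess G (x + t • v) v, v⟫ t := by
  have hc : HasDerivAt (fun t : ℝ => x + t • v) v t := by
    simpa using ((hasDerivAt_id t).smul_const v).const_add x
  have hg : HasDerivAt (fun t : ℝ => gradient G (x + t • v)) (hess G (x + t • v) v) t :=
    (hasFDerivAt_gradient hG _).comp_hasDerivAt t hc
  have := hg.inner ℝ (hasDerivAt_const t v)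
  simpa using this

lemma taylor_upper (hG : ContDiff ℝ 2 G) {C : ℝ}
    (hub : ∀ y v, ⟪hess G y v, v⟫ ≤ C * ‖v‖ ^ 2) (x v : EuclideanSpace ℝ (Fin d)) :
    G (x + v) ≤ G x + ⟪gradient G x, v⟫ + C / 2 * ‖v‖ ^ 2 := by
  set A : ℝ := ⟪gradient G x, v⟫ with hA
  set B : ℝ := C / 2 * ‖v‖ ^ 2 with hB
  -- ψ is antitone
  have hψd : ∀ t : ℝ, HasDerivAt (fun t : ℝ => ⟪gradient G (x + t • v), v⟫ - C * t * ‖v‖ ^ 2)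
      (⟪hess G (x + t • v) v, v⟫ - C * ‖v‖ ^ 2) t := by
    intro t
    have h2 : HasDerivAt (fun t : ℝ => C * t * ‖v‖ ^ 2) (C * ‖v‖ ^ 2) t := by
      simpa using (((hasDerivAt_id t).const_mul C).mul_const (‖v‖ ^ 2))
    exact (line_deriv2 hG x v t).sub h2
  have hψa : Antitone (fun t : ℝ => ⟪gradient G (x + t • v), v⟫ - C * t * ‖v‖ ^ 2) := by
    apply antitone_of_deriv_nonpos
    · exact fun t => ((hψd t).differentiableAt)
    · intro t
      rw [(hψd t).deriv]
      have := hub (x + t • v) v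
      linarith
  have hψ : ∀ t : ℝ, 0 ≤ t → ⟪gradient G (x + t • v), v⟫ ≤ A + C * t * ‖v‖ ^ 2 := by
    intro t ht
    have := hψa ht
    simp only at this
    have h0 : ⟪gradient G (x + (0:ℝ) • v), v⟫ - C * 0 * ‖v‖ ^ 2 = A := by simp [hA]
    rw [h0] at this
    linarith
  -- φ
  have hφd : ∀ t : ℝ, HasDerivAt (fun t : ℝ => G (x + t • v) - t * A - t ^ 2 * B)
      (⟪gradient G (x + t • v), v⟫ - A - 2 * t * B) t := by
    intro t
    have h1 : HasDerivAt (fun t : ℝ => t * A) A t := by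
      simpa using (hasDerivAt_id t).mul_const A
    have h2 : HasDerivAt (fun t : ℝ => t ^ 2 * B) (2 * t * B) t := by
      have := (hasDerivAt_pow 2 t).mul_const B
      simpa [mul_comm, mul_assoc, mul_left_comm] using this
    exact ((line_deriv1 hG x v t).sub h1).sub h2
  have hφa : AntitoneOn (fun t : ℝ => G (x + t • v) - t * A - t ^ 2 * B) (Set.Icc 0 1) := by
    apply antitoneOn_of_deriv_nonpos (convex_Icc 0 1)
    · exact Continuous.continuousOn (by
        have : Differentiable ℝ (fun t : ℝ => G (x + t • v) - t * A - t ^ 2 * B) :=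
          fun t => (hφd t).differentiableAt
        exact this.continuous)
    · intro t _
      exact (hφd t).differentiableAt.differentiableWithinAt
    · intro t ht
      rw [interior_Icc] at ht
      rw [(hφd t).deriv]
      have h1 := hψ t ht.1.le
      have h2 : C * t * ‖v‖ ^ 2 = 2 * t * B := by rw [hB]; ring
      linarith
  have h01 := hφa (Set.left_mem_Icc.2 zero_le_one) (Set.right_mem_Icc.2 zero_le_one) zero_le_one
  simp only [zero_smul, add_zero, zero_mul, one_smul, one_mul, zero_pow, one_pow] at h01
  norm_num at h01
  linarith

lemma taylor_lower (hG : ContDiff ℝ 2 G) {c : ℝ}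
    (hlb : ∀ y v, c * ‖v‖ ^ 2 ≤ ⟪hess G y v, v⟫) (x v : EuclideanSpace ℝ (Fin d)) :
    G x + ⟪gradient G x, v⟫ + c / 2 * ‖v‖ ^ 2 ≤ G (x + v) := by
  set A : ℝ := ⟪gradient G x, v⟫ with hA
  set B : ℝ := c / 2 * ‖v‖ ^ 2 with hB
  have hψd : ∀ t : ℝ, HasDerivAt (fun t : ℝ => ⟪gradient G (x + t • v), v⟫ - c * t * ‖v‖ ^ 2)
      (⟪hess G (x + t • v) v, v⟫ - c * ‖v‖ ^ 2) t := by
    intro t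
    have h2 : HasDerivAt (fun t : ℝ => c * t * ‖v‖ ^ 2) (c * ‖v‖ ^ 2) t := by
      simpa using (((hasDerivAt_id t).const_mul c).mul_const (‖v‖ ^ 2))
    exact (line_deriv2 hG x v t).sub h2
  have hψa : Monotone (fun t : ℝ => ⟪gradient G (x + t • v), v⟫ - c * t * ‖v‖ ^ 2) := by
    apply monotone_of_deriv_nonneg
    · exact fun t => ((hψd t).differentiableAt)
    · intro t
      rw [(hψd t).deriv]
      have := hlb (x + t • v) v
      linarith
  have hψ : ∀ t : ℝ, 0 ≤ t → A + c * t * ‖v‖ ^ 2 ≤ ⟪gradient G (x + t • v), v⟫ := by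
    intro t ht
    have := hψa ht
    simp only at this
    have h0 : ⟪gradient G (x + (0:ℝ) • v), v⟫ - c * 0 * ‖v‖ ^ 2 = A := by simp [hA]
    rw [h0] at this
    linarith
  have hφd : ∀ t : ℝ, HasDerivAt (fun t : ℝ => G (x + t • v) - t * A - t ^ 2 * B)
      (⟪gradient G (x + t • v), v⟫ - A - 2 * t * B) t := by
    intro t
    have h1 : HasDerivAt (fun t : ℝ => t * A) A t := by
      simpa using (hasDerivAt_id t).mul_const A
    have h2 : HasDerivAt (fun t : ℝ => t ^ 2 * B) (2 * t * B) t := by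
      have := (hasDerivAt_pow 2 t).mul_const B
      simpa [mul_comm, mul_assoc, mul_left_comm] using this
    exact ((line_deriv1 hG x v t).sub h1).sub h2
  have hφa : MonotoneOn (fun t : ℝ => G (x + t • v) - t * A - t ^ 2 * B) (Set.Icc 0 1) := by
    apply monotoneOn_of_deriv_nonneg (convex_Icc 0 1)
    · exact Continuous.continuousOn (by
        have : Differentiable ℝ (fun t : ℝ => G (x + t • v) - t * A - t ^ 2 * B) :=
          fun t => (hφd t).differentiableAt
        exact this.continuous)
    · intro t _
      exact (hφd t).differentiableAt.differentiableWithinAt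
    · intro t ht
      rw [interior_Icc] at ht
      rw [(hφd t).deriv]
      have h1 := hψ t ht.1.le
      have h2 : c * t * ‖v‖ ^ 2 = 2 * t * B := by rw [hB]; ring
      linarith
  have h01 := hφa (Set.left_mem_Icc.2 zero_le_one) (Set.right_mem_Icc.2 zero_le_one) zero_le_one
  simp only [zero_smul, add_zero, zero_mul, one_smul, one_mul, zero_pow, one_pow] at h01
  norm_num at h01
  linarith

end Aux
set_option maxHeartbeats 1000000

theorem stmt_1 {d n s : ℕ} (hn : 0 < n) (hs : 0 < s)
    (f : Fin n → EuclideanSpace ℝ (Fin d) → ℝ) (K : Fin n → ℝ)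
    (F : EuclideanSpace ℝ (Fin d) → ℝ)
    (γ Kc β ε Khat : ℝ) (x xstar p : EuclideanSpace ℝ (Fin d))
    (S : Fin s → Fin n)
    -- each fᵢ is twice continuously differentiable, convex, with `∇²fᵢ ⪯ Kᵢ I`
    (hf : ∀ i, ContDiff ℝ 2 (f i))
    (hKpos : ∀ i, 0 < K i)
    (hfpsd : ∀ i y v, 0 ≤ ⟪(hess (f i) y) v, v⟫)
    (hfK : ∀ i y v, ⟪(hess (f i) y) v, v⟫ ≤ K i * ‖v‖ ^ 2)
    -- `F = (1/n) ∑ fᵢ`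
    (hF : ∀ y, F y = (1 / n : ℝ) * ∑ i, f i y)
    -- `γ I ⪯ ∇²F ⪯ K I` with `0 < γ ≤ K`
    (hγ : 0 < γ) (hγK : γ ≤ Kc)
    (hFlow : ∀ y v, γ * ‖v‖ ^ 2 ≤ ⟪(hess F y) v, v⟫)
    (hFup : ∀ y v, ⟪(hess F y) v, v⟫ ≤ Kc * ‖v‖ ^ 2)
    -- `xstar` is the (unique) minimizer of `F`
    (hmin : ∀ y, F xstar ≤ F y)
    (hβ : 0 < β) (hβ1 : β < 1) (hε : 0 < ε) (hε1 : ε < 1)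
    -- `Khat = K̂_{|S|}` if the sample is without replacement (distinct indices),
    -- and `Khat = K̂₁ = max Kᵢ` otherwise
    (hKhat :
      (Function.Injective S ∧ ∃ Q : Finset (Fin n), Q.card = s ∧
          (∀ i ∈ Q, ∀ j ∉ Q, K j ≤ K i) ∧ Khat = (∑ i ∈ Q, K i) / s) ∨
      (¬ Function.Injective S ∧ (∀ i, K i ≤ Khat) ∧ ∃ i, Khat = K i))
    -- `λ_min(H(x)) ≥ (1-ε)γ` for the sub-sampled Hessian `H(x) = (1/|S|) ∑_{j∈S} ∇²f_j(x)`
    (hH : ∀ v, (1 - ε) * γ * ‖v‖ ^ 2 ≤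
        ⟪((s : ℝ)⁻¹ • ∑ j, hess (f (S j)) x) v, v⟫)
    -- `p = -H(x)⁻¹ ∇F(x)`
    (hp : ((s : ℝ)⁻¹ • ∑ j, hess (f (S j)) x) p = -(gradient F x)) :
    -- (a) any `0 < α ≤ 2(1-β)(1-ε)/κ` satisfies the Armijo condition
    (∀ α : ℝ, 0 < α → α ≤ 2 * (1 - β) * (1 - ε) / (Kc / γ) →
        F (x + α • p) ≤ F x + α * β * ⟪p, gradient F x⟫) ∧
    -- (b) any `α > 0` satisfying the Armijo condition yields linear decrease
    (∀ α : ℝ, 0 < α → F (x + α • p) ≤ F x + α * β * ⟪p, gradient F x⟫ →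
        F (x + α • p) - F xstar ≤ (1 - 2 * α * β / (Khat / γ)) * (F x - F xstar)) := by
  classical
  set g := gradient F x with hg
  set H : EuclideanSpace ℝ (Fin d) →L[ℝ] EuclideanSpace ℝ (Fin d) :=
    (s : ℝ)⁻¹ • ∑ j, hess (f (S j)) x with hHdef
  have hspos : (0:ℝ) < s := by exact_mod_cast hs
  have hKcpos : 0 < Kc := lt_of_lt_of_le hγ hγK
  have hFc : ContDiff ℝ 2 F := by
    have hFf : F = fun y => (1 / n : ℝ) * ∑ i, f i y := funext hF
    rw [hFf]
    exact contDiff_const.mul (ContDiff.sum fun i _ => hf i)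
  have hHapp : ∀ v w : EuclideanSpace ℝ (Fin d),
      ⟪H v, w⟫ = (s:ℝ)⁻¹ * ∑ j, ⟪hess (f (S j)) x v, w⟫ := by
    intro v w
    rw [hHdef, ContinuousLinearMap.smul_apply, real_inner_smul_left,
      ContinuousLinearMap.sum_apply, sum_inner]
  have hHsymm : ∀ v w, ⟪H v, w⟫ = ⟪H w, v⟫ := by
    intro v w
    rw [hHapp, hHapp]
    congr 1
    exact Finset.sum_congr rfl fun j _ => hess_symm (hf (S j)) x v w
  have hHpsd : ∀ v, 0 ≤ ⟪H v, v⟫ := by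
    intro v
    rw [hHapp]
    exact mul_nonneg (by positivity) (Finset.sum_nonneg fun j _ => hfpsd (S j) x v)
  have hCS : ∀ u w, ⟪H u, w⟫ ^ 2 ≤ ⟪H u, u⟫ * ⟪H w, w⟫ := by
    intro u w
    have hq : ∀ t : ℝ, 0 ≤ ⟪H w, w⟫ * (t * t) + (2 * ⟪H u, w⟫) * t + ⟪H u, u⟫ := by
      intro t
      have h0 := hHpsd (u + t • w)
      have hexp : ⟪H (u + t • w), u + t • w⟫
          = ⟪H w, w⟫ * (t * t) + (2 * ⟪H u, w⟫) * t + ⟪H u, u⟫ := by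
        rw [map_add, map_smul]
        simp only [inner_add_left, inner_add_right, real_inner_smul_left, real_inner_smul_right]
        rw [hHsymm w u]
        ring
      linarith [hexp ▸ h0]
    have hd := discrim_le_zero hq
    rw [discrim] at hd
    nlinarith [hd]
  -- positivity of Khat and upper bound for the H-form
  have hKey : 0 < Khat ∧ ∀ v, ⟪H v, v⟫ ≤ Khat * ‖v‖ ^ 2 := by
    rcases hKhat with ⟨hinj, Q, hQcard, hQtop, hKh⟩ | ⟨_, hub, i, hKh⟩
    · constructor
      · rw [hKh]
        apply div_pos _ hspos
        apply Finset.sum_pos (fun i _ => hKpos i)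
        rw [← Finset.card_pos, hQcard]; exact hs
      · intro v
        rw [hHapp]
        have h1 : ∑ j, ⟪hess (f (S j)) x v, v⟫ ≤ ∑ j : Fin s, K (S j) * ‖v‖ ^ 2 :=
          Finset.sum_le_sum fun j _ => hfK (S j) x v
        set T := Finset.univ.image S with hT
        have h2 : ∑ j : Fin s, K (S j) = ∑ i ∈ T, K i := by
          rw [hT, Finset.sum_image (fun a _ b _ h => hinj h)]
        have hTcard : T.card = s := by
          rw [hT, Finset.card_image_of_injective _ hinj, Finset.card_univ, Fintype.card_fin]
        have hsum : ∑ i ∈ T, K i ≤ ∑ i ∈ Q, K i := by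
          have hsplitT : ∑ i ∈ T ∩ Q, K i + ∑ i ∈ T \ Q, K i = ∑ i ∈ T, K i :=
            Finset.sum_inter_add_sum_sdiff T Q K
          have hsplitQ : ∑ i ∈ Q ∩ T, K i + ∑ i ∈ Q \ T, K i = ∑ i ∈ Q, K i :=
            Finset.sum_inter_add_sum_sdiff Q T K
          have hcardeq : (T \ Q).card = (Q \ T).card := by
            have h3 := Finset.card_inter_add_card_sdiff T Q
            have h4 := Finset.card_inter_add_card_sdiff Q T
            rw [Finset.inter_comm] at h4
            omega
          have hdiffs : ∑ i ∈ T \ Q, K i ≤ ∑ i ∈ Q \ T, K i := by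
            rcases Finset.eq_empty_or_nonempty (Q \ T) with he | hne
            · have hTQ : (T \ Q) = ∅ := Finset.card_eq_zero.1 (by rw [hcardeq, he]; simp)
              simp [hTQ, he]
            · obtain ⟨i₀, hi₀mem, hi₀min⟩ := Finset.exists_min_image (Q \ T) K hne
              have hi₀Q : i₀ ∈ Q := (Finset.mem_sdiff.1 hi₀mem).1
              calc ∑ i ∈ T \ Q, K i ≤ (T \ Q).card • K i₀ := by
                    apply Finset.sum_le_card_nsmul
                    intro j hj
                    exact hQtop i₀ hi₀Q j (Finset.mem_sdiff.1 hj).2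
                _ = (Q \ T).card • K i₀ := by rw [hcardeq]
                _ ≤ ∑ i ∈ Q \ T, K i := Finset.card_nsmul_le_sum _ _ _ (fun i hi => hi₀min i hi)
          rw [Finset.inter_comm] at hsplitQ
          linarith
        have hfin : (s:ℝ)⁻¹ * ∑ j, ⟪hess (f (S j)) x v, v⟫
            ≤ (s:ℝ)⁻¹ * ((∑ i ∈ Q, K i) * ‖v‖ ^ 2) := by
          apply mul_le_mul_of_nonneg_left _ (by positivity)
          calc ∑ j, ⟪hess (f (S j)) x v, v⟫ ≤ ∑ j : Fin s, K (S j) * ‖v‖ ^ 2 := h1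
            _ = (∑ i ∈ T, K i) * ‖v‖ ^ 2 := by rw [← Finset.sum_mul, h2]
            _ ≤ (∑ i ∈ Q, K i) * ‖v‖ ^ 2 :=
                mul_le_mul_of_nonneg_right hsum (by positivity)
        rw [hKh]
        calc (s:ℝ)⁻¹ * ∑ j, ⟪hess (f (S j)) x v, v⟫
            ≤ (s:ℝ)⁻¹ * ((∑ i ∈ Q, K i) * ‖v‖ ^ 2) := hfin
          _ = (∑ i ∈ Q, K i) / s * ‖v‖ ^ 2 := by ring
    · constructor
      · rw [hKh]; exact hKpos i
      · intro v
        rw [hHapp]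
        have hKhnn : 0 ≤ Khat := le_of_lt (by rw [hKh]; exact hKpos i)
        have h1 : ∑ j, ⟪hess (f (S j)) x v, v⟫ ≤ ∑ _j : Fin s, Khat * ‖v‖ ^ 2 :=
          Finset.sum_le_sum fun j _ => le_trans (hfK (S j) x v)
            (mul_le_mul_of_nonneg_right (hub (S j)) (by positivity))
        rw [Finset.sum_const, Finset.card_univ, Fintype.card_fin, nsmul_eq_mul] at h1
        have h3 := mul_le_mul_of_nonneg_left h1 (by positivity : (0:ℝ) ≤ (s:ℝ)⁻¹)
        have hss : (s:ℝ)⁻¹ * ((s:ℝ) * (Khat * ‖v‖ ^ 2)) = Khat * ‖v‖ ^ 2 := by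
          field_simp
        linarith
  obtain ⟨hKhpos, hHub⟩ := hKey
  have hpg : ⟪p, g⟫ = -⟪H p, p⟫ := by
    have h1 : g = -(H p) := by rw [hp]; simp
    rw [real_inner_comm, h1, inner_neg_left]
  have hQlb : (1 - ε) * γ * ‖p‖ ^ 2 ≤ ⟪H p, p⟫ := hH p
  constructor
  · -- part (a)
    intro α hα hαle
    have ht := taylor_upper hFc hFup x (α • p)
    rw [← hg, real_inner_smul_right, norm_smul, Real.norm_eq_abs, mul_pow, sq_abs] at ht
    have hα2 : α * Kc ≤ 2 * (1 - β) * (1 - ε) * γ := by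
      rw [div_div_eq_mul_div] at hαle
      rwa [le_div_iff₀ hKcpos] at hαle
    have h1 := mul_le_mul_of_nonneg_right hα2 (mul_nonneg hα.le (sq_nonneg ‖p‖))
    have h2 := mul_le_mul_of_nonneg_left hQlb
      (mul_nonneg hα.le (by linarith : (0:ℝ) ≤ 1 - β))
    have hgp : ⟪g, p⟫ = -⟪H p, p⟫ := by rw [real_inner_comm]; exact hpg
    rw [hgp] at ht
    rw [hpg]
    nlinarith [h1, h2, ht]
  · -- part (b)
    intro α hα harm
    have hD : 0 ≤ F x - F xstar := by linarith [hmin x]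
    have hPL : 2 * γ * (F x - F xstar) ≤ ‖g‖ ^ 2 := by
      have ht := taylor_lower hFc hFlow x (xstar - x)
      rw [← hg] at ht
      have hx1 : x + (xstar - x) = xstar := by rw [add_comm, sub_add_cancel]
      rw [hx1] at ht
      have hcs := abs_real_inner_le_norm g (xstar - x)
      have h3 : F x - F xstar ≤ ‖g‖ * ‖xstar - x‖ - γ / 2 * ‖xstar - x‖ ^ 2 := by
        have := (abs_le.1 hcs).1
        linarith
      have h4 := mul_le_mul_of_nonneg_left h3 (by positivity : (0:ℝ) ≤ 2 * γ)
      nlinarith [h4, sq_nonneg (‖g‖ - γ * ‖xstar - x‖)]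
    have hgH : ‖g‖ ^ 2 ≤ Khat * ⟪H p, p⟫ := by
      have hcs := hCS p (H p)
      have h1 : ⟪H p, H p⟫ = ‖g‖ ^ 2 := by
        rw [hp, inner_neg_neg, real_inner_self_eq_norm_sq]
      have h2 : ⟪H (H p), H p⟫ ≤ Khat * ‖g‖ ^ 2 := by
        rw [hp]
        simpa [norm_neg] using hHub (-g)
      by_cases hg0 : ‖g‖ ^ 2 = 0
      · rw [hg0]
        exact mul_nonneg hKhpos.le (hHpsd p)
      · have hgpos : 0 < ‖g‖ ^ 2 := lt_of_le_of_ne (sq_nonneg _) (Ne.symm hg0)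
        have h3 : ⟪H p, p⟫ * ⟪H (H p), H p⟫ ≤ ⟪H p, p⟫ * (Khat * ‖g‖ ^ 2) :=
          mul_le_mul_of_nonneg_left h2 (hHpsd p)
        nlinarith [hcs, h1, h3, hgpos]
    rw [div_div_eq_mul_div]
    have key : 2 * α * β * γ / Khat * (F x - F xstar) ≤ α * β * ⟪H p, p⟫ := by
      rw [div_mul_eq_mul_div, div_le_iff₀ hKhpos]
      have h5 := mul_le_mul_of_nonneg_left hPL (mul_nonneg hα.le hβ.le)
      have h6 := mul_le_mul_of_nonneg_left hgH (mul_nonneg hα.le hβ.le)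
      nlinarith [h5, h6]
    rw [hpg] at harm
    have expand : (1 - 2 * α * β * γ / Khat) * (F x - F xstar)
        = (F x - F xstar) - 2 * α * β * γ / Khat * (F x - F xstar) := by ring
    rw [expand]
    linarith [key, harm]
end

section
/- Let β ∈ (0,1), 0 < θ₂ < 1, x ∈ ℝ^p, and let S be a sample of distinct indices of size s. Let H = H(x), take λ > λ_min(H), and let Ĥ = P(λ; H) be the spectral regularization of H. Suppose 0 ≤ θ₁ ≤ (1/2)√( λ / max{λ, K̂_s} ) and p ∈ ℝ^p satisfies ‖Ĥp + ∇F(x)‖ ≤ θ₁‖∇F(x)‖ and pᵀ∇F(x) ≤ −(1−θ₂) pᵀĤp. Then: (a) every step size α with 0 < α ≤ 2(1−θ₂)(1−β)λ/K satisfies the Armijo condition F(x+αp) ≤ F(x) + αβ pᵀ∇F(x); (b) for any α satisfying the Armijo condition, F(x+αp) ≤ F(x) − (αβ / (2 max{K̂_s, λ})) ‖∇F(x)‖²; (c) if in addition γ·I ⪯ ∇²F(x) for all x with γ > 0 (so F has a unique minimizer x*), then F(x+αp) − F(x*) ≤ (1 − αβγ / max{K̂_s, λ})(F(x) − F(x*)).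 -/
open scoped RealInnerProductSpace

lemma my_taylor_le {φ φ' φ'' : ℝ → ℝ} {C t : ℝ} (ht : 0 ≤ t)
    (h1 : ∀ u, HasDerivAt φ (φ' u) u) (h2 : ∀ u, HasDerivAt φ' (φ'' u) u)
    (hC : ∀ u, φ'' u ≤ C) :
    φ t ≤ φ 0 + t * φ' 0 + C * t ^ 2 / 2 := by
  have key : ∀ u ∈ Set.Ici (0:ℝ), φ' u ≤ φ' 0 + C * u := by
    have hd : ∀ u, HasDerivAt (fun v => φ' 0 + C * v - φ' v) (C - φ'' u) u := by
      intro u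
      simpa using ((hasDerivAt_const u (φ' 0)).fun_add ((hasDerivAt_id u).const_mul C)).fun_sub (h2 u)
    have hmono : MonotoneOn (fun v => φ' 0 + C * v - φ' v) (Set.Ici 0) := by
      apply monotoneOn_of_deriv_nonneg (convex_Ici 0)
      · exact fun u _ => ((hd u).continuousAt).continuousWithinAt
      · exact fun u _ => ((hd u).differentiableAt).differentiableWithinAt
      · intro u _
        rw [(hd u).deriv]
        linarith [hC u]
    intro u hu
    have := hmono Set.self_mem_Ici hu hu
    simp at this
    linarith
  have hd2 : ∀ u, HasDerivAt (fun v => φ 0 + v * φ' 0 + C * v ^ 2 / 2 - φ v)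
      (φ' 0 + C * u - φ' u) u := by
    intro u
    have h : HasDerivAt (F := ℝ) _ _ u := (((hasDerivAt_const u (φ 0)).fun_add ((hasDerivAt_id u).mul_const (φ' 0))).fun_add
      (((hasDerivAt_pow 2 u)).const_mul (C / 2))).fun_sub (h1 u)
    convert h using 1
    · funext v; simp only [id_eq]; ring
    · ring
  have hmono2 : MonotoneOn (fun v => φ 0 + v * φ' 0 + C * v ^ 2 / 2 - φ v) (Set.Ici 0) := by
    apply monotoneOn_of_deriv_nonneg (convex_Ici 0)
    · exact fun u _ => ((hd2 u).continuousAt).continuousWithinAt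
    · exact fun u _ => ((hd2 u).differentiableAt).differentiableWithinAt
    · intro u hu
      rw [(hd2 u).deriv]
      rw [interior_Ici] at hu
      have := key u (Set.mem_Ici.mpr (le_of_lt (Set.mem_Ioi.mp hu)))
      linarith
  have := hmono2 Set.self_mem_Ici ht ht
  simp at this
  linarith

lemma my_taylor_ge {φ φ' φ'' : ℝ → ℝ} {c t : ℝ} (ht : 0 ≤ t)
    (h1 : ∀ u, HasDerivAt φ (φ' u) u) (h2 : ∀ u, HasDerivAt φ' (φ'' u) u)
    (hc : ∀ u, c ≤ φ'' u) :
    φ 0 + t * φ' 0 + c * t ^ 2 / 2 ≤ φ t := by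
  have := my_taylor_le (φ := fun u => -φ u) (φ' := fun u => -φ' u) (φ'' := fun u => -φ'' u)
    (C := -c) ht (fun u => (h1 u).neg) (fun u => (h2 u).neg) (fun u => by linarith [hc u])
  linarith

lemma my_sum_le_top {n : ℕ} (K : Fin n → ℝ) (Q T : Finset (Fin n)) (hcard : T.card = Q.card)
    (htop : ∀ i ∈ Q, ∀ j ∉ Q, K j ≤ K i) : ∑ i ∈ T, K i ≤ ∑ i ∈ Q, K i := by
  have h1 : (T \ Q).card = (Q \ T).card := by
    have a := Finset.card_sdiff_add_card_inter T Q
    have b := Finset.card_sdiff_add_card_inter Q T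
    rw [Finset.inter_comm] at b
    omega
  have e := Finset.equivOfCardEq h1
  have hTQ : ∑ i ∈ T \ Q, K i ≤ ∑ i ∈ Q \ T, K i := by
    rw [← Finset.sum_coe_sort (T \ Q), ← Finset.sum_coe_sort (Q \ T)]
    rw [← Equiv.sum_comp e (fun j : (Q \ T : Finset (Fin n)) => K j)]
    apply Finset.sum_le_sum
    intro i _
    have hi : (i : Fin n) ∉ Q := (Finset.mem_sdiff.mp i.2).2
    have he : ((e i : Fin n)) ∈ Q := (Finset.mem_sdiff.mp (e i).2).1
    exact htop _ he _ hi
  have hT := Finset.sum_inter_add_sum_sdiff T Q K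
  have hQ := Finset.sum_inter_add_sum_sdiff Q T K
  rw [Finset.inter_comm] at hQ
  linarith




lemma my_grad_contDiff {d : ℕ} {f : EuclideanSpace ℝ (Fin d) → ℝ} (hf : ContDiff ℝ 2 f) :
    ContDiff ℝ 1 (gradient f) := by
  have : gradient f = fun y => (InnerProductSpace.toDual ℝ _).symm (fderiv ℝ f y) := rfl
  rw [this]
  exact (InnerProductSpace.toDual ℝ _).symm.contDiff.comp (hf.fderiv_right (by norm_num))

lemma my_hess_hasFDerivAt {d : ℕ} {f : EuclideanSpace ℝ (Fin d) → ℝ} (hf : ContDiff ℝ 2 f) (y) :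
    HasFDerivAt (gradient f) (hess f y) y :=
  (((my_grad_contDiff hf).differentiable one_ne_zero) y).hasFDerivAt

lemma my_gradF_eq {d n : ℕ} {f : Fin n → EuclideanSpace ℝ (Fin d) → ℝ}
    {F : EuclideanSpace ℝ (Fin d) → ℝ} (hf : ∀ i, ContDiff ℝ 2 (f i))
    (hF : ∀ y, F y = (1 / n : ℝ) * ∑ i, f i y) (y) :
    gradient F y = (1 / n : ℝ) • ∑ i, gradient (f i) y := by
  have hFd : HasFDerivAt F ((1 / n : ℝ) • ∑ i, fderiv ℝ (f i) y) y := by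
    have : HasFDerivAt (fun z => (1 / n : ℝ) * ∑ i, f i z)
        ((1 / n : ℝ) • ∑ i, fderiv ℝ (f i) y) y := by
      exact (HasFDerivAt.fun_sum (fun i _ =>
        (((hf i).differentiable (by norm_num)) y).hasFDerivAt)).const_mul _
    exact this.congr_of_eventuallyEq (by filter_upwards with z using (hF z))
  have : gradient F y = (InnerProductSpace.toDual ℝ _).symm (fderiv ℝ F y) := rfl
  rw [this, hFd.fderiv, map_smul, map_sum]
  rfl

lemma my_hessF_hasFDerivAt {d n : ℕ} {f : Fin n → EuclideanSpace ℝ (Fin d) → ℝ}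
    {F : EuclideanSpace ℝ (Fin d) → ℝ} (hf : ∀ i, ContDiff ℝ 2 (f i))
    (hF : ∀ y, F y = (1 / n : ℝ) * ∑ i, f i y) (y) :
    HasFDerivAt (gradient F) (hess F y) y ∧
      hess F y = (1 / n : ℝ) • ∑ i, hess (f i) y := by
  have hgF : gradient F = fun z => (1 / n : ℝ) • ∑ i, gradient (f i) z :=
    funext (my_gradF_eq hf hF)
  have hd : HasFDerivAt (gradient F) ((1 / n : ℝ) • ∑ i, hess (f i) y) y := by
    rw [hgF]
    exact (HasFDerivAt.fun_sum (fun i _ => my_hess_hasFDerivAt (hf i) y)).const_smul (1 / n : ℝ)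
  have : hess F y = (1 / n : ℝ) • ∑ i, hess (f i) y := hd.fderiv
  exact ⟨this ▸ hd, this⟩




lemma my_line_hasDerivAt {d : ℕ} {F : EuclideanSpace ℝ (Fin d) → ℝ} (hF : ContDiff ℝ 2 F)
    (x v : EuclideanSpace ℝ (Fin d)) (t : ℝ) :
    HasDerivAt (fun u : ℝ => F (x + u • v)) ⟪gradient F (x + t • v), v⟫ t := by
  have hc : HasDerivAt (fun u : ℝ => x + u • v) v t := by
    simpa using ((hasDerivAt_id t).smul_const v).const_add x
  have hFd : HasFDerivAt F (InnerProductSpace.toDual ℝ _ (gradient F (x + t • v))) (x + t • v) :=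
    ((hF.differentiable (by norm_num)) (x + t • v)).hasGradientAt.hasFDerivAt
  have : HasDerivAt (fun u : ℝ => F (x + u • v)) _ t := hFd.comp_hasDerivAt t hc
  simpa [InnerProductSpace.toDual_apply_apply] using this

lemma my_line_hasDerivAt2 {d : ℕ} {F : EuclideanSpace ℝ (Fin d) → ℝ}
    (hgF : ∀ y, HasFDerivAt (gradient F) (hess F y) y)
    (x v : EuclideanSpace ℝ (Fin d)) (t : ℝ) :
    HasDerivAt (fun u : ℝ => ⟪gradient F (x + u • v), v⟫)
      ⟪(hess F (x + t • v)) v, v⟫ t := by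
  have hc : HasDerivAt (fun u : ℝ => x + u • v) v t := by
    simpa using ((hasDerivAt_id t).smul_const v).const_add x
  have hg : HasDerivAt (fun u : ℝ => gradient F (x + u • v)) ((hess F (x + t • v)) v) t :=
    (hgF (x + t • v)).comp_hasDerivAt (l := gradient F) t hc
  have this2 := (innerSL ℝ v).hasFDerivAt.comp_hasDerivAt t hg
  have this : HasDerivAt
      (fun u : ℝ => ⟪v, gradient F (x + u • v)⟫) ⟪v, (hess F (x + t • v)) v⟫ t := this2
  have heq : (fun u : ℝ => ⟪v, gradient F (x + u • v)⟫) =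
      fun u : ℝ => ⟪gradient F (x + u • v), v⟫ := funext fun u => real_inner_comm _ _
  rw [heq, real_inner_comm] at this
  exact this



lemma my_inner_repr {d : ℕ} (b : OrthonormalBasis (Fin d) ℝ (EuclideanSpace ℝ (Fin d)))
    (u w : EuclideanSpace ℝ (Fin d)) :
    ⟪u, w⟫ = ∑ k, b.repr u k * b.repr w k := by
  have he : ∀ a c : EuclideanSpace ℝ (Fin d), ⟪a, c⟫ = ∑ k, a k * c k := by
    intro a c
    simp [PiLp.inner_apply, RCLike.inner_apply]
    exact Finset.sum_congr rfl fun _ _ => mul_comm _ _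
  rw [← b.repr.inner_map_map u w, he]

lemma my_norm_repr {d : ℕ} (b : OrthonormalBasis (Fin d) ℝ (EuclideanSpace ℝ (Fin d)))
    (u : EuclideanSpace ℝ (Fin d)) :
    ‖u‖ ^ 2 = ∑ k, (b.repr u k) ^ 2 := by
  rw [← real_inner_self_eq_norm_sq, my_inner_repr b]
  simp [sq]

lemma my_repr_CLM {d : ℕ} (b : OrthonormalBasis (Fin d) ℝ (EuclideanSpace ℝ (Fin d)))
    (T : EuclideanSpace ℝ (Fin d) →L[ℝ] EuclideanSpace ℝ (Fin d)) (μ : Fin d → ℝ)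
    (hT : ∀ i, T (b i) = μ i • b i) (p : EuclideanSpace ℝ (Fin d)) (k : Fin d) :
    b.repr (T p) k = μ k * b.repr p k := by
  rw [b.repr_apply_apply]
  conv_lhs => rw [← b.sum_repr p]
  rw [map_sum, inner_sum]
  have horth := orthonormal_iff_ite.mp b.orthonormal
  simp_rw [map_smul, hT, smul_smul, real_inner_smul_right, horth]
  simp [mul_ite, mul_comm]

lemma my_star {d : ℕ} (μ c gg rr : Fin d → ℝ) (lam M G R2 : ℝ)
    (hlam : 0 < lam) (hM : 0 < M) (hμ1 : ∀ k, lam ≤ μ k) (hμ2 : ∀ k, μ k ≤ M)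
    (hrr : ∀ k, rr k = μ k * c k + gg k)
    (hG : G = ∑ k, gg k ^ 2) (hR2 : R2 = ∑ k, rr k ^ 2)
    (hRb : R2 ≤ lam / (4 * M) * G) :
    ∑ k, c k * gg k ≤ -(G / (2 * M)) := by
  have hμpos : ∀ k, 0 < μ k := fun k => lt_of_lt_of_le hlam (hμ1 k)
  set A := ∑ k, gg k ^ 2 / μ k with hA
  have hG0 : 0 ≤ G := hG ▸ Finset.sum_nonneg fun k _ => sq_nonneg _
  have hA0 : 0 ≤ A := Finset.sum_nonneg fun k _ => div_nonneg (sq_nonneg _) (hμpos k).le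
  have hAG : G / M ≤ A := by
    rw [hG, Finset.sum_div]
    exact Finset.sum_le_sum fun k _ =>
      div_le_div_of_nonneg_left (sq_nonneg _) (hμpos k) (hμ2 k)
  set X := ∑ k, (rr k * gg k) / μ k with hXdef
  have hsplit : ∑ k, c k * gg k = X - A := by
    rw [hXdef, hA, ← Finset.sum_sub_distrib]
    apply Finset.sum_congr rfl
    intro k _
    rw [hrr k]
    have hne := (hμpos k).ne'
    field_simp
    ring
  have hs : ∀ k, Real.sqrt (μ k) ^ 2 = μ k := fun k => Real.sq_sqrt (hμpos k).le
  have hX2 : X ^ 2 ≤ (∑ k, rr k ^ 2 / μ k) * A := by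
    have h1 : X = ∑ k, (rr k / Real.sqrt (μ k)) * (gg k / Real.sqrt (μ k)) := by
      apply Finset.sum_congr rfl
      intro k _
      rw [div_mul_div_comm, ← sq, hs k]
    have h2 := Finset.sum_mul_sq_le_sq_mul_sq Finset.univ
      (fun k => rr k / Real.sqrt (μ k)) (fun k => gg k / Real.sqrt (μ k))
    rw [h1]
    calc (∑ k, (rr k / Real.sqrt (μ k)) * (gg k / Real.sqrt (μ k))) ^ 2
        ≤ (∑ k, (rr k / Real.sqrt (μ k)) ^ 2) * ∑ k, (gg k / Real.sqrt (μ k)) ^ 2 := h2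
      _ = (∑ k, rr k ^ 2 / μ k) * A := by
          congr 1 <;> (apply Finset.sum_congr rfl; intro k _; rw [div_pow, hs k])
  have hrb : (∑ k, rr k ^ 2 / μ k) ≤ R2 / lam := by
    rw [hR2, Finset.sum_div]
    exact Finset.sum_le_sum fun k _ =>
      div_le_div_of_nonneg_left (sq_nonneg _) hlam (hμ1 k)
  have hX2b : X ^ 2 ≤ G / (4 * M) * A := by
    calc X ^ 2 ≤ (∑ k, rr k ^ 2 / μ k) * A := hX2
      _ ≤ (R2 / lam) * A := by
          apply mul_le_mul_of_nonneg_right hrb hA0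
      _ ≤ (G / (4 * M)) * A := by
          apply mul_le_mul_of_nonneg_right _ hA0
          rw [div_le_div_iff₀ hlam (by positivity)]
          have hmul := mul_le_mul_of_nonneg_right hRb (by positivity : (0:ℝ) ≤ 4 * M)
          have hid : lam / (4 * M) * G * (4 * M) = lam * G := by field_simp
          nlinarith
  have hXle : X ≤ Real.sqrt (G / (4 * M) * A) := by
    calc X ≤ |X| := le_abs_self X
      _ = Real.sqrt (X ^ 2) := (Real.sqrt_sq_eq_abs X).symm
      _ ≤ Real.sqrt (G / (4 * M) * A) := Real.sqrt_le_sqrt hX2b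
  have hsq : Real.sqrt (G / (4 * M) * A) ≤ (G / M + A) / 4 := by
    have h1 : G / (4 * M) * A ≤ ((G / M + A) / 4) ^ 2 := by
      have hq : G / (4 * M) = (G / M) / 4 := by ring
      nlinarith [sq_nonneg (G / M - A), hq]
    calc Real.sqrt (G / (4 * M) * A) ≤ Real.sqrt (((G / M + A) / 4) ^ 2) :=
          Real.sqrt_le_sqrt h1
      _ = |(G / M + A) / 4| := Real.sqrt_sq_eq_abs _
      _ = (G / M + A) / 4 := abs_of_nonneg (by positivity)
  have hGM : 0 ≤ G / M := div_nonneg hG0 hM.le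
  have : G / (2 * M) = (G / M) / 2 := by ring
  rw [hsplit, this]
  linarith

set_option maxHeartbeats 2000000 in
theorem stmt_4 {d n s : ℕ} (hn : 0 < n) (hs : 0 < s)
    (f : Fin n → EuclideanSpace ℝ (Fin d) → ℝ) (K : Fin n → ℝ)
    (F : EuclideanSpace ℝ (Fin d) → ℝ)
    (Kc Khats β θ₁ θ₂ lam : ℝ) (x p : EuclideanSpace ℝ (Fin d))
    (S : Fin s → Fin n)
    (b : OrthonormalBasis (Fin d) ℝ (EuclideanSpace ℝ (Fin d))) (ev : Fin d → ℝ)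
    (Hhat : EuclideanSpace ℝ (Fin d) →L[ℝ] EuclideanSpace ℝ (Fin d))
    -- each fᵢ is twice continuously differentiable, convex, with `∇²fᵢ ⪯ Kᵢ I`
    (hf : ∀ i, ContDiff ℝ 2 (f i))
    (hKpos : ∀ i, 0 < K i)
    (hfpsd : ∀ i y v, 0 ≤ ⟪(hess (f i) y) v, v⟫)
    (hfK : ∀ i y v, ⟪(hess (f i) y) v, v⟫ ≤ K i * ‖v‖ ^ 2)
    -- `F = (1/n) ∑ fᵢ`, so that `∇²F ⪯ K I` with `K = (1/n) ∑ Kᵢ`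
    (hF : ∀ y, F y = (1 / n : ℝ) * ∑ i, f i y)
    (hKc : Kc = (∑ i, K i) / n)
    -- `K̂_s` is the average of the `s` largest `Kᵢ`'s
    (hKhats : ∃ Q : Finset (Fin n), Q.card = s ∧
        (∀ i ∈ Q, ∀ j ∉ Q, K j ≤ K i) ∧ Khats = (∑ i ∈ Q, K i) / s)
    (hβ : 0 < β) (hβ1 : β < 1) (hθ₂0 : 0 < θ₂) (hθ₂1 : θ₂ < 1)
    -- the sample consists of distinct indices
    (hSinj : Function.Injective S)
    -- spectral decomposition of the sub-sampled Hessian `H = H(x)`: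
    -- `b` is an orthonormal eigenbasis with eigenvalues `ev`
    (heig : ∀ i, ((s : ℝ)⁻¹ • ∑ j, hess (f (S j)) x) (b i) = ev i • b i)
    -- `λ > λ_min(H)`
    (hlam : ∃ i, ev i < lam)
    -- `Ĥ = P(λ; H)`: the spectral regularization of `H`
    (hHhat : ∀ i, Hhat (b i) = max (ev i) lam • b i)
    -- `0 ≤ θ₁ ≤ (1/2)√(λ / max{λ, K̂_s})`
    (hθ₁0 : 0 ≤ θ₁) (hθ₁le : θ₁ ≤ (1 / 2) * Real.sqrt (lam / max lam Khats))
    -- inexactness conditions on the update direction `p`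
    (hp₁ : ‖Hhat p + gradient F x‖ ≤ θ₁ * ‖gradient F x‖)
    (hp₂ : ⟪p, gradient F x⟫ ≤ -(1 - θ₂) * ⟪p, Hhat p⟫) :
    -- (a) any `0 < α ≤ 2(1-θ₂)(1-β)λ/K` satisfies the Armijo condition
    (∀ α : ℝ, 0 < α → α ≤ 2 * (1 - θ₂) * (1 - β) * lam / Kc →
        F (x + α • p) ≤ F x + α * β * ⟪p, gradient F x⟫) ∧
    -- (b) any `α > 0` satisfying the Armijo condition yields the stated decrease
    (∀ α : ℝ, 0 < α → F (x + α • p) ≤ F x + α * β * ⟪p, gradient F x⟫ →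
        F (x + α • p) ≤ F x - α * β / (2 * max Khats lam) * ‖gradient F x‖ ^ 2) ∧
    -- (c) if moreover `F` is `γ`-strongly convex with minimizer `xstar`, a linear rate holds
    (∀ (γ : ℝ) (xstar : EuclideanSpace ℝ (Fin d)), 0 < γ →
        (∀ y v, γ * ‖v‖ ^ 2 ≤ ⟪(hess F y) v, v⟫) → (∀ y, F xstar ≤ F y) →
        ∀ α : ℝ, 0 < α → F (x + α • p) ≤ F x + α * β * ⟪p, gradient F x⟫ →
          F (x + α • p) - F xstar ≤
            (1 - α * β * γ / max Khats lam) * (F x - F xstar)) := by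
  obtain ⟨Q, hQcard, hQtop, hQsum⟩ := hKhats
  have spos : (0:ℝ) < s := by exact_mod_cast hs
  have npos : (0:ℝ) < n := by exact_mod_cast hn
  set g := gradient F x with hgdef
  -- smoothness of F
  have hFc : ContDiff ℝ 2 F := by
    have hFe : F = fun y => (1 / n : ℝ) * ∑ i, f i y := funext hF
    rw [hFe]
    exact contDiff_const.mul (ContDiff.sum fun i _ => hf i)
  have hgF : ∀ y, HasFDerivAt (gradient F) (hess F y) y :=
    fun y => (my_hessF_hasFDerivAt hf hF y).1
  have hhessF : ∀ y, hess F y = (1 / n : ℝ) • ∑ i, hess (f i) y :=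
    fun y => (my_hessF_hasFDerivAt hf hF y).2
  have hKcpos : 0 < Kc := by
    rw [hKc]
    apply div_pos _ npos
    exact Finset.sum_pos (fun i _ => hKpos i) ⟨⟨0, hn⟩, Finset.mem_univ _⟩
  -- upper bound on the Hessian quadratic form of F
  have hhub : ∀ y v, ⟪(hess F y) v, v⟫ ≤ Kc * ‖v‖ ^ 2 := by
    intro y v
    rw [hhessF y, ContinuousLinearMap.smul_apply, ContinuousLinearMap.sum_apply,
      real_inner_smul_left, sum_inner]
    calc (1 / n : ℝ) * ∑ i, ⟪(hess (f i) y) v, v⟫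
        ≤ (1 / n : ℝ) * ∑ i, K i * ‖v‖ ^ 2 := by
          apply mul_le_mul_of_nonneg_left (Finset.sum_le_sum fun i _ => hfK i y v)
          positivity
      _ = Kc * ‖v‖ ^ 2 := by rw [hKc, ← Finset.sum_mul]; ring
  -- descent lemma
  have descent_up : ∀ α : ℝ, 0 ≤ α →
      F (x + α • p) ≤ F x + α * ⟪g, p⟫ + Kc * ‖p‖ ^ 2 * α ^ 2 / 2 := by
    intro α hα
    have h := my_taylor_le (φ := fun u : ℝ => F (x + u • p))
      (φ' := fun u : ℝ => ⟪gradient F (x + u • p), p⟫)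
      (φ'' := fun u : ℝ => ⟪(hess F (x + u • p)) p, p⟫) (C := Kc * ‖p‖ ^ 2) hα
      (fun u => my_line_hasDerivAt hFc x p u) (fun u => my_line_hasDerivAt2 hgF x p u)
      (fun u => hhub _ p)
    simp only [zero_smul, add_zero] at h
    exact h
  -- basic quadratic form computation for the subsampled Hessian
  have hb1 : ∀ k, ‖b k‖ = 1 := b.orthonormal.1
  have hHapp : ∀ k, ⟪((s:ℝ)⁻¹ • ∑ j, hess (f (S j)) x) (b k), b k⟫
      = (s:ℝ)⁻¹ * ∑ j, ⟪(hess (f (S j)) x) (b k), b k⟫ := by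
    intro k
    rw [ContinuousLinearMap.smul_apply, ContinuousLinearMap.sum_apply,
      real_inner_smul_left, sum_inner]
  have hevq : ∀ k, ev k = (s:ℝ)⁻¹ * ∑ j, ⟪(hess (f (S j)) x) (b k), b k⟫ := by
    intro k
    rw [← hHapp k, heig k, real_inner_smul_left, real_inner_self_eq_norm_sq, hb1 k]
    norm_num
  have hev0 : ∀ k, 0 ≤ ev k := by
    intro k
    rw [hevq k]
    apply mul_nonneg (by positivity)
    exact Finset.sum_nonneg fun j _ => hfpsd _ x (b k)
  have hlam0 : 0 < lam := by
    obtain ⟨i0, hi0⟩ := hlam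
    exact lt_of_le_of_lt (hev0 i0) hi0
  have hevle : ∀ k, ev k ≤ Khats := by
    intro k
    have hsum : ∑ j, ⟪(hess (f (S j)) x) (b k), b k⟫ ≤ ∑ j : Fin s, K (S j) := by
      apply Finset.sum_le_sum
      intro j _
      have := hfK (S j) x (b k)
      rwa [hb1 k, one_pow, mul_one] at this
    have himg : ∑ j : Fin s, K (S j) = ∑ i ∈ Finset.image S Finset.univ, K i :=
      (Finset.sum_image (fun a _ c _ h => hSinj h)).symm
    have hcard : (Finset.image S Finset.univ).card = Q.card := by
      rw [Finset.card_image_of_injective _ hSinj, Finset.card_univ, Fintype.card_fin, hQcard]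
    have hle := my_sum_le_top K Q _ hcard hQtop
    have h2 : ∑ j, ⟪(hess (f (S j)) x) (b k), b k⟫ ≤ s * Khats := by
      rw [hQsum]
      rw [himg] at hsum
      have : (s:ℝ) * ((∑ i ∈ Q, K i) / s) = ∑ i ∈ Q, K i := by field_simp
      rw [this]
      linarith
    rw [hevq k]
    rw [inv_mul_le_iff₀ spos]
    linarith [h2]
  set M := max Khats lam with hM
  have hMpos : 0 < M := lt_of_lt_of_le hlam0 (le_max_right _ _)
  set μ : Fin d → ℝ := fun k => max (ev k) lam with hμ
  have hμ1 : ∀ k, lam ≤ μ k := fun k => le_max_right _ _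
  have hμ2 : ∀ k, μ k ≤ M := fun k => max_le_max (hevle k) le_rfl
  set c : Fin d → ℝ := fun k => b.repr p k with hc
  set gg : Fin d → ℝ := fun k => b.repr g k with hgg
  set rr : Fin d → ℝ := fun k => μ k * c k + gg k with hrrdef
  have hreprH : ∀ k, b.repr (Hhat p) k = μ k * c k := my_repr_CLM b Hhat μ hHhat p
  have hreprr : ∀ k, b.repr (Hhat p + g) k = rr k := by
    intro k
    rw [map_add]
    have : (b.repr (Hhat p) + b.repr g) k = b.repr (Hhat p) k + b.repr g k := rfl
    rw [this, hreprH k]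
  set G := ‖g‖ ^ 2 with hGdef
  have hG0 : 0 ≤ G := sq_nonneg _
  have hGsum : G = ∑ k, gg k ^ 2 := my_norm_repr b g
  set R2 := ‖Hhat p + g‖ ^ 2 with hR2def
  have hR2 : R2 = ∑ k, rr k ^ 2 := by
    rw [hR2def, my_norm_repr b (Hhat p + g)]
    exact Finset.sum_congr rfl fun k _ => by rw [hreprr k]
  have hRb : R2 ≤ lam / (4 * M) * G := by
    have h1 : R2 ≤ θ₁ ^ 2 * G := by
      rw [hR2def, hGdef]
      calc ‖Hhat p + g‖ ^ 2 ≤ (θ₁ * ‖g‖) ^ 2 := by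
            apply pow_le_pow_left₀ (norm_nonneg _) hp₁
        _ = θ₁ ^ 2 * ‖g‖ ^ 2 := by ring
    have hmc : max lam Khats = M := by rw [hM, max_comm]
    have h2 : θ₁ ^ 2 ≤ lam / (4 * M) := by
      have hnn : 0 ≤ lam / max lam Khats := by positivity
      calc θ₁ ^ 2 ≤ ((1 / 2) * Real.sqrt (lam / max lam Khats)) ^ 2 :=
            pow_le_pow_left₀ hθ₁0 hθ₁le 2
        _ = (1 / 4) * (lam / max lam Khats) := by
            rw [mul_pow, Real.sq_sqrt hnn]; ring
        _ = lam / (4 * M) := by rw [hmc]; ring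
    calc R2 ≤ θ₁ ^ 2 * G := h1
      _ ≤ lam / (4 * M) * G := mul_le_mul_of_nonneg_right h2 hG0
  -- the key inequality ⟪p, g⟫ ≤ -G/(2M)
  have star : ⟪p, g⟫ ≤ -(G / (2 * M)) := by
    rw [my_inner_repr b p g]
    exact my_star μ c gg rr lam M G R2 hlam0 hMpos hμ1 hμ2 (fun k => rfl) hGsum hR2 hRb
  refine ⟨?_, ?_, ?_⟩
  · -- (a)
    intro α hα hαle
    have hup := descent_up α hα.le
    have hNp : (0:ℝ) ≤ ‖p‖ ^ 2 := sq_nonneg _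
    have hpH : lam * ‖p‖ ^ 2 ≤ ⟪p, Hhat p⟫ := by
      rw [my_inner_repr b p (Hhat p), my_norm_repr b p]
      rw [Finset.mul_sum]
      apply Finset.sum_le_sum
      intro k _
      rw [hreprH k]
      nlinarith [sq_nonneg (b.repr p k), hμ1 k]
    have hI : ⟪p, g⟫ ≤ -(1 - θ₂) * (lam * ‖p‖ ^ 2) := by
      refine le_trans hp₂ ?_
      exact mul_le_mul_of_nonpos_left hpH (by linarith)
    have hαK : α * Kc ≤ 2 * (1 - θ₂) * (1 - β) * lam := by
      rw [← le_div_iff₀ hKcpos]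
      exact hαle
    have hcomm : ⟪g, p⟫ = ⟪p, g⟫ := real_inner_comm _ _
    rw [hcomm] at hup
    have e1 : α * Kc * (α * ‖p‖ ^ 2) ≤ 2 * (1 - θ₂) * (1 - β) * lam * (α * ‖p‖ ^ 2) :=
      mul_le_mul_of_nonneg_right hαK (by positivity)
    have e2 : α * (1 - β) * ⟪p, g⟫ ≤ α * (1 - β) * (-(1 - θ₂) * (lam * ‖p‖ ^ 2)) := by
      exact mul_le_mul_of_nonneg_left hI (mul_nonneg hα.le (by linarith))
    linarith [hup, e1, e2]
  · -- (b)
    intro α hα harm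
    have h1 : α * β * ⟪p, g⟫ ≤ α * β * (-(G / (2 * M))) :=
      mul_le_mul_of_nonneg_left star (by positivity)
    have h2 : α * β * (-(G / (2 * M))) = -(α * β / (2 * M) * G) := by ring
    linarith [harm]
  · -- (c)
    intro γ xstar hγ hsc hmin α hα harm
    set v := xstar - x with hv
    have descent_low : F x + ⟪g, v⟫ + γ * ‖v‖ ^ 2 * 1 ^ 2 / 2 ≤ F xstar := by
      have h := my_taylor_ge (φ := fun u : ℝ => F (x + u • v))
        (φ' := fun u : ℝ => ⟪gradient F (x + u • v), v⟫)
        (φ'' := fun u : ℝ => ⟪(hess F (x + u • v)) v, v⟫) (c := γ * ‖v‖ ^ 2)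
        (zero_le_one)
        (fun u => my_line_hasDerivAt hFc x v u) (fun u => my_line_hasDerivAt2 hgF x v u)
        (fun u => hsc _ v)
      simp only [zero_smul, add_zero, one_smul] at h
      rw [hv] at h
      rw [add_sub_cancel] at h
      simpa [← hv, ← hgdef] using h
    have hPL : 2 * γ * (F x - F xstar) ≤ G := by
      have hcs : -(‖g‖ * ‖v‖) ≤ ⟪g, v⟫ := by
        have h := abs_real_inner_le_norm g v
        have := neg_abs_le (⟪g, v⟫)
        linarith
      have h3 : F x - F xstar ≤ ‖g‖ * ‖v‖ - γ * ‖v‖ ^ 2 / 2 := by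
        have := descent_low
        nlinarith
      rw [hGdef]
      nlinarith [sq_nonneg (γ * ‖v‖ - ‖g‖), hγ, h3]
    have h1 : α * β * ⟪p, g⟫ ≤ α * β * (-(G / (2 * M))) :=
      mul_le_mul_of_nonneg_left star (by positivity)
    have h2 : γ * (F x - F xstar) / M ≤ G / (2 * M) := by
      rw [div_le_div_iff₀ hMpos (by positivity : (0:ℝ) < 2 * M)]
      nlinarith [mul_le_mul_of_nonneg_right hPL hMpos.le]
    have h3 : α * β * (-(G / (2 * M))) ≤ α * β * (-(γ * (F x - F xstar) / M)) := by
      apply mul_le_mul_of_nonneg_left _ (by positivity : (0:ℝ) ≤ α * β)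
      linarith
    have hr : α * β * (γ * (F x - F xstar) / M) = α * β * γ / M * (F x - F xstar) := by
      ring
    have hexp : (1 - α * β * γ / M) * (F x - F xstar)
        = (F x - F xstar) - α * β * γ / M * (F x - F xstar) := by ring
    linarith [harm]
end

section
/- Assume additionally γ·I ⪯ ∇²F(x) for all x with 0 < γ ≤ K, let 0 < ε < 1, β ∈ (0,1), 0 < θ₂ < 1, and let S be a sample of distinct indices of size s whose sub-sampled Hessian H = H(x) satisfies λ_min(H) ≥ (1−ε)γ. Take λ > λ_min(H), let Ĥ = P(λ; H), suppose 0 ≤ θ₁ ≤ (1/2)√( λ / max{λ, K̂_s} ), and let p satisfy ‖Ĥp + ∇F(x)‖ ≤ θ₁‖∇F(x)‖ and pᵀ∇F(x) ≤ −(1−θ₂) pᵀĤp. Then for any α satisfying the Armijo condition F(x+αp) ≤ F(x) + αβ pᵀ∇F(x), one has F(x+αp) − F(x*) ≤ (1 − αβγ / max{K̂_s, λ})(F(x) − F(x*)), and every step size α with 0 < α ≤ 2(1−θ₂)(1−β)(1−ε)/κ satisfies the Armijo condition. -/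
open scoped RealInnerProductSpace

section Aux

lemma real_taylor_lower (φ ψ χ : ℝ → ℝ) (c : ℝ)
    (hφ : ∀ t, HasDerivAt φ (ψ t) t) (hψ : ∀ t, HasDerivAt ψ (χ t) t)
    (hχ : ∀ t, c ≤ χ t) : φ 0 + ψ 0 + c / 2 ≤ φ 1 := by
  set h' : ℝ → ℝ := fun t => ψ t - ψ 0 - c * t with hh'
  have hd' : ∀ t, HasDerivAt h' (χ t - c) t := by
    intro t
    exact (((hψ t).sub_const (ψ 0)).sub ((hasDerivAt_id t).const_mul c)).congr_deriv (by ring)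
  have hmono' : Monotone h' := by
    apply monotone_of_deriv_nonneg
    · exact fun t => ((hd' t).differentiableAt)
    · intro t
      rw [(hd' t).deriv]
      linarith [hχ t]
  have h'nonneg : ∀ t, 0 ≤ t → 0 ≤ h' t := by
    intro t ht
    have := hmono' ht
    simpa [hh'] using this
  set h : ℝ → ℝ := fun t => φ t - ψ 0 * t - c * t ^ 2 / 2 with hh
  have hd : ∀ t, HasDerivAt h (h' t) t := by
    intro t
    have h1 : HasDerivAt (fun t : ℝ => ψ 0 * t) (ψ 0) t := by
      simpa using (hasDerivAt_id t).const_mul (ψ 0)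
    have h2 : HasDerivAt (fun t : ℝ => c * t ^ 2 / 2) (c * t) t := by
      have := ((hasDerivAt_pow 2 t).const_mul c).div_const 2
      simpa using this.congr_deriv (by ring)
    exact ((hφ t).sub h1).sub h2
  have hmono : MonotoneOn h (Set.Icc (0:ℝ) 1) := by
    apply monotoneOn_of_deriv_nonneg (convex_Icc 0 1)
    · exact Continuous.continuousOn (by
        have : Differentiable ℝ h := fun t => (hd t).differentiableAt
        exact this.continuous)
    · intro t _
      exact (hd t).differentiableAt.differentiableWithinAt
    · intro t ht
      rw [interior_Icc] at ht
      rw [(hd t).deriv]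
      exact h'nonneg t ht.1.le
  have := hmono (Set.mem_Icc.mpr ⟨le_refl 0, zero_le_one⟩)
    (Set.mem_Icc.mpr ⟨zero_le_one, le_refl 1⟩) zero_le_one
  simp only [hh] at this
  nlinarith [this]

variable {d : ℕ}

local notation "E" => EuclideanSpace ℝ (Fin d)

lemma line_deriv1_s5 (F : E → ℝ) (hFd : Differentiable ℝ F) (x v : E) (t : ℝ) :
    HasDerivAt (fun t : ℝ => F (x + t • v)) ⟪gradient F (x + t • v), v⟫ t := by
  have hc : HasDerivAt (fun t : ℝ => x + t • v) v t := by
    simpa using ((hasDerivAt_id t).smul_const v).const_add x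
  have h1 : HasFDerivAt F (InnerProductSpace.toDual ℝ _ (gradient F (x + t • v))) (x + t • v) :=
    (hFd (x + t • v)).hasGradientAt.hasFDerivAt
  simpa [Function.comp_def] using h1.comp_hasDerivAt t hc

lemma line_deriv2_s5 (F : E → ℝ) (hgd : Differentiable ℝ (gradient F)) (x v : E) (t : ℝ) :
    HasDerivAt (fun t : ℝ => ⟪gradient F (x + t • v), v⟫)
      ⟪fderiv ℝ (gradient F) (x + t • v) v, v⟫ t := by
  have hc : HasDerivAt (fun t : ℝ => x + t • v) v t := by
    simpa using ((hasDerivAt_id t).smul_const v).const_add x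
  have h1 : HasFDerivAt (gradient F) (fderiv ℝ (gradient F) (x + t • v)) (x + t • v) :=
    (hgd (x + t • v)).hasFDerivAt
  have h2 : HasDerivAt (fun t : ℝ => gradient F (x + t • v))
      (fderiv ℝ (gradient F) (x + t • v) v) t := by
    have := h1.comp_hasDerivAt t hc; exact this
  simpa using HasDerivAt.inner ℝ h2 (hasDerivAt_const t v)

lemma grad_taylor_lower (F : E → ℝ) (a : ℝ)
    (hFd : Differentiable ℝ F) (hgd : Differentiable ℝ (gradient F))
    (hlow : ∀ y w, a * ‖w‖ ^ 2 ≤ ⟪fderiv ℝ (gradient F) y w, w⟫)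
    (x v : E) : F x + ⟪gradient F x, v⟫ + a / 2 * ‖v‖ ^ 2 ≤ F (x + v) := by
  have := real_taylor_lower (fun t => F (x + t • v))
    (fun t => ⟪gradient F (x + t • v), v⟫)
    (fun t => ⟪fderiv ℝ (gradient F) (x + t • v) v, v⟫) (a * ‖v‖ ^ 2)
    (line_deriv1_s5 F hFd x v) (line_deriv2_s5 F hgd x v) (fun t => hlow _ v)
  simp only [zero_smul, add_zero, one_smul] at this
  linarith

lemma grad_taylor_upper (F : E → ℝ) (c : ℝ)
    (hFd : Differentiable ℝ F) (hgd : Differentiable ℝ (gradient F))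
    (hup : ∀ y w, ⟪fderiv ℝ (gradient F) y w, w⟫ ≤ c * ‖w‖ ^ 2)
    (x v : E) : F (x + v) ≤ F x + ⟪gradient F x, v⟫ + c / 2 * ‖v‖ ^ 2 := by
  have := real_taylor_lower (fun t => -F (x + t • v))
    (fun t => -⟪gradient F (x + t • v), v⟫)
    (fun t => -⟪fderiv ℝ (gradient F) (x + t • v) v, v⟫) (-(c * ‖v‖ ^ 2))
    (fun t => (line_deriv1_s5 F hFd x v t).neg) (fun t => (line_deriv2_s5 F hgd x v t).neg)
    (fun t => neg_le_neg (hup _ v))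
  simp only [zero_smul, add_zero, one_smul] at this
  linarith

lemma sum_le_sum_sep {n : ℕ} (K : Fin n → ℝ) (T Q : Finset (Fin n))
    (hcard : T.card = Q.card) (hsep : ∀ i ∈ Q, ∀ j ∉ Q, K j ≤ K i) :
    ∑ i ∈ T, K i ≤ ∑ i ∈ Q, K i := by
  have h1 : ∑ i ∈ T ∩ Q, K i + ∑ i ∈ T \ Q, K i = ∑ i ∈ T, K i :=
    Finset.sum_inter_add_sum_sdiff T Q K
  have h2 : ∑ i ∈ Q ∩ T, K i + ∑ i ∈ Q \ T, K i = ∑ i ∈ Q, K i :=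
    Finset.sum_inter_add_sum_sdiff Q T K
  have hc1 : (T ∩ Q).card + (T \ Q).card = T.card := Finset.card_inter_add_card_sdiff T Q
  have hc2 : (Q ∩ T).card + (Q \ T).card = Q.card := Finset.card_inter_add_card_sdiff Q T
  have hQT : Q ∩ T = T ∩ Q := Finset.inter_comm Q T
  have hcc : (T \ Q).card = (Q \ T).card := by
    rw [hQT] at hc2; omega
  have key : ∑ i ∈ T \ Q, K i ≤ ∑ i ∈ Q \ T, K i := by
    let e := Finset.equivOfCardEq hcc
    calc ∑ i ∈ T \ Q, K i = ∑ x : (T \ Q : Finset (Fin n)), K x := by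
          rw [Finset.sum_coe_sort]
      _ ≤ ∑ x : (T \ Q : Finset (Fin n)), K (e x) := by
          apply Finset.sum_le_sum
          intro x _
          have hx : (x : Fin n) ∉ Q := (Finset.mem_sdiff.mp x.2).2
          have he : ((e x : Fin n)) ∈ Q := (Finset.mem_sdiff.mp (e x).2).1
          exact hsep _ he _ hx
      _ = ∑ y : (Q \ T : Finset (Fin n)), K y := e.sum_comp (fun y => K (y : Fin n))
      _ = ∑ i ∈ Q \ T, K i := by rw [Finset.sum_coe_sort]
  rw [hQT] at h2
  linarith

lemma core1 {ι : Type*} [Fintype ι] (μ P G : ι → ℝ) (lam M θ₁ : ℝ)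
    (hlam : 0 < lam) (hlamM : lam ≤ M)
    (hμl : ∀ i, lam ≤ μ i) (hμu : ∀ i, μ i ≤ M)
    (hθ2 : θ₁ ^ 2 * M ≤ lam / 4)
    (hres : ∑ i, (μ i * P i + G i) ^ 2 ≤ θ₁ ^ 2 * ∑ i, G i ^ 2) :
    ∑ i, P i * G i ≤ -(1 / (2 * M)) * ∑ i, G i ^ 2 := by
  have hM : 0 < M := lt_of_lt_of_le hlam hlamM
  have hμpos : ∀ i, 0 < μ i := fun i => lt_of_lt_of_le hlam (hμl i)
  set r : ι → ℝ := fun i => μ i * P i + G i with hr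
  set A2 : ℝ := ∑ i, G i ^ 2 / μ i with hA2
  set B2 : ℝ := ∑ i, r i ^ 2 / μ i with hB2
  set C : ℝ := ∑ i, (r i / Real.sqrt (μ i)) * (G i / Real.sqrt (μ i)) with hC
  set Gs : ℝ := ∑ i, G i ^ 2 with hGs
  have hGs0 : 0 ≤ Gs := Finset.sum_nonneg fun i _ => sq_nonneg _
  have hA20 : 0 ≤ A2 := Finset.sum_nonneg fun i _ => div_nonneg (sq_nonneg _) (hμpos i).le
  have hB20 : 0 ≤ B2 := Finset.sum_nonneg fun i _ => div_nonneg (sq_nonneg _) (hμpos i).le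
  have hdecomp : ∑ i, P i * G i = C - A2 := by
    rw [hC, hA2, ← Finset.sum_sub_distrib]
    apply Finset.sum_congr rfl
    intro i _
    have h1 : Real.sqrt (μ i) * Real.sqrt (μ i) = μ i := Real.mul_self_sqrt (hμpos i).le
    have h3 : μ i ≠ 0 := (hμpos i).ne'
    have h4 : r i / Real.sqrt (μ i) * (G i / Real.sqrt (μ i)) = r i * G i / μ i := by
      rw [div_mul_div_comm, h1]
    rw [h4, hr]
    field_simp
    ring
  have hsq : ∀ i, (Real.sqrt (μ i)) ^ 2 = μ i := fun i => Real.sq_sqrt (hμpos i).le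
  have hCS : C ≤ Real.sqrt B2 * Real.sqrt A2 := by
    have h := Real.sum_mul_le_sqrt_mul_sqrt Finset.univ
      (fun i => r i / Real.sqrt (μ i)) (fun i => G i / Real.sqrt (μ i))
    have e1 : ∑ i, (r i / Real.sqrt (μ i)) ^ 2 = B2 := by
      apply Finset.sum_congr rfl; intro i _; rw [div_pow, hsq i]
    have e2 : ∑ i, (G i / Real.sqrt (μ i)) ^ 2 = A2 := by
      apply Finset.sum_congr rfl; intro i _; rw [div_pow, hsq i]
    rw [e1, e2] at h
    exact h
  have hA2ge : Gs / M ≤ A2 := by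
    rw [hGs, Finset.sum_div]
    exact Finset.sum_le_sum fun i _ =>
      div_le_div_of_nonneg_left (sq_nonneg _) (hμpos i) (hμu i)
  have hrsum : ∑ i, r i ^ 2 ≤ θ₁ ^ 2 * Gs := hres
  have hB2le : B2 ≤ (θ₁ ^ 2 * Gs) / lam := by
    have h1 : B2 ≤ (∑ i, r i ^ 2) / lam := by
      rw [Finset.sum_div]
      exact Finset.sum_le_sum fun i _ =>
        div_le_div_of_nonneg_left (sq_nonneg _) hlam (hμl i)
    calc B2 ≤ (∑ i, r i ^ 2) / lam := h1
      _ ≤ (θ₁ ^ 2 * Gs) / lam := by gcongr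
  have hBA : B2 ≤ A2 / 4 := by
    have h2 : (θ₁ ^ 2 * Gs) / lam ≤ Gs / (4 * M) := by
      rw [div_le_div_iff₀ hlam (by positivity)]
      nlinarith [hGs0, hθ2, hM]
    have h3 : Gs / (4 * M) ≤ A2 / 4 := by
      have h4 : Gs / M ≤ A2 := hA2ge
      rw [div_le_div_iff₀ (by positivity) (by norm_num : (0:ℝ) < 4)]
      rw [div_le_iff₀ hM] at h4
      nlinarith
    linarith
  have hsB : Real.sqrt B2 ≤ Real.sqrt A2 / 2 := by
    have h1 : Real.sqrt B2 ≤ Real.sqrt (A2 / 4) := Real.sqrt_le_sqrt hBA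
    have h2 : Real.sqrt (A2 / 4) = Real.sqrt A2 / 2 := by
      rw [show (4:ℝ) = 2 ^ 2 by norm_num, Real.sqrt_div hA20,
        Real.sqrt_sq (by norm_num : (0:ℝ) ≤ 2)]
    linarith
  have hC2 : C ≤ A2 / 2 := by
    have h1 : Real.sqrt B2 * Real.sqrt A2 ≤ (Real.sqrt A2 / 2) * Real.sqrt A2 :=
      mul_le_mul_of_nonneg_right hsB (Real.sqrt_nonneg _)
    have h2 : (Real.sqrt A2 / 2) * Real.sqrt A2 = A2 / 2 := by
      rw [div_mul_eq_mul_div, Real.mul_self_sqrt hA20]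
    linarith
  have h9 : Gs ≤ A2 * M := (div_le_iff₀ hM).mp hA2ge
  rw [hdecomp, show -(1 / (2 * M)) * Gs = -Gs / (2 * M) by ring,
    le_div_iff₀ (by positivity : (0:ℝ) < 2 * M)]
  nlinarith [mul_le_mul_of_nonneg_right (show C - A2 ≤ -A2/2 by linarith)
    (by positivity : (0:ℝ) ≤ 2 * M), h9]

end Aux

set_option maxHeartbeats 1000000 in
theorem stmt_5 {d n s : ℕ} (hn : 0 < n) (hs : 0 < s)
    (f : Fin n → EuclideanSpace ℝ (Fin d) → ℝ) (K : Fin n → ℝ)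
    (F : EuclideanSpace ℝ (Fin d) → ℝ)
    (γ Kc Khats β ε θ₁ θ₂ lam : ℝ) (x xstar p : EuclideanSpace ℝ (Fin d))
    (S : Fin s → Fin n)
    (b : OrthonormalBasis (Fin d) ℝ (EuclideanSpace ℝ (Fin d))) (ev : Fin d → ℝ)
    (Hhat : EuclideanSpace ℝ (Fin d) →L[ℝ] EuclideanSpace ℝ (Fin d))
    -- each fᵢ is twice continuously differentiable, convex, with `∇²fᵢ ⪯ Kᵢ I`
    (hf : ∀ i, ContDiff ℝ 2 (f i))
    (hKpos : ∀ i, 0 < K i)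
    (hfpsd : ∀ i y v, 0 ≤ ⟪(hess (f i) y) v, v⟫)
    (hfK : ∀ i y v, ⟪(hess (f i) y) v, v⟫ ≤ K i * ‖v‖ ^ 2)
    -- `F = (1/n) ∑ fᵢ`
    (hF : ∀ y, F y = (1 / n : ℝ) * ∑ i, f i y)
    -- `γ I ⪯ ∇²F ⪯ K I` with `0 < γ ≤ K`
    (hγ : 0 < γ) (hγK : γ ≤ Kc)
    (hFlow : ∀ y v, γ * ‖v‖ ^ 2 ≤ ⟪(hess F y) v, v⟫)
    (hFup : ∀ y v, ⟪(hess F y) v, v⟫ ≤ Kc * ‖v‖ ^ 2)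
    -- `xstar` is the (unique) minimizer of `F`
    (hmin : ∀ y, F xstar ≤ F y)
    -- `K̂_s` is the average of the `s` largest `Kᵢ`'s
    (hKhats : ∃ Q : Finset (Fin n), Q.card = s ∧
        (∀ i ∈ Q, ∀ j ∉ Q, K j ≤ K i) ∧ Khats = (∑ i ∈ Q, K i) / s)
    (hβ : 0 < β) (hβ1 : β < 1) (hε : 0 < ε) (hε1 : ε < 1)
    (hθ₂0 : 0 < θ₂) (hθ₂1 : θ₂ < 1)
    -- the sample consists of distinct indices
    (hSinj : Function.Injective S)
    -- `λ_min(H) ≥ (1-ε)γ` for the sub-sampled Hessian `H = H(x)`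
    (hH : ∀ v, (1 - ε) * γ * ‖v‖ ^ 2 ≤
        ⟪((s : ℝ)⁻¹ • ∑ j, hess (f (S j)) x) v, v⟫)
    -- spectral decomposition of `H`: `b` is an orthonormal eigenbasis, eigenvalues `ev`
    (heig : ∀ i, ((s : ℝ)⁻¹ • ∑ j, hess (f (S j)) x) (b i) = ev i • b i)
    -- `λ > λ_min(H)`
    (hlam : ∃ i, ev i < lam)
    -- `Ĥ = P(λ; H)`: the spectral regularization of `H`
    (hHhat : ∀ i, Hhat (b i) = max (ev i) lam • b i)
    -- `0 ≤ θ₁ ≤ (1/2)√(λ / max{λ, K̂_s})`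
    (hθ₁0 : 0 ≤ θ₁) (hθ₁le : θ₁ ≤ (1 / 2) * Real.sqrt (lam / max lam Khats))
    -- inexactness conditions on the update direction `p`
    (hp₁ : ‖Hhat p + gradient F x‖ ≤ θ₁ * ‖gradient F x‖)
    (hp₂ : ⟪p, gradient F x⟫ ≤ -(1 - θ₂) * ⟪p, Hhat p⟫) :
    -- any `α > 0` satisfying the Armijo condition yields the stated linear rate
    (∀ α : ℝ, 0 < α → F (x + α • p) ≤ F x + α * β * ⟪p, gradient F x⟫ →
        F (x + α • p) - F xstar ≤
          (1 - α * β * γ / max Khats lam) * (F x - F xstar)) ∧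
    -- and any `0 < α ≤ 2(1-θ₂)(1-β)(1-ε)/κ` satisfies the Armijo condition
    (∀ α : ℝ, 0 < α → α ≤ 2 * (1 - θ₂) * (1 - β) * (1 - ε) / (Kc / γ) →
        F (x + α • p) ≤ F x + α * β * ⟪p, gradient F x⟫) := by
  classical
  -- smoothness of F
  have hFeq : F = fun y => (1 / n : ℝ) * ∑ i, f i y := funext hF
  have hFc : ContDiff ℝ 2 F := by
    rw [hFeq]; exact contDiff_const.mul (ContDiff.sum fun i _ => hf i)
  have hFd : Differentiable ℝ F := hFc.differentiable (by norm_num)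
  have hgc : ContDiff ℝ 1 (gradient F) := by
    have h1 : ContDiff ℝ 1 (fderiv ℝ F) := hFc.fderiv_right (by norm_num)
    exact (InnerProductSpace.toDual ℝ _).symm.contDiff.comp h1
  have hgd : Differentiable ℝ (gradient F) := hgc.differentiable (by norm_num)
  -- Taylor bounds
  have hTl : ∀ y v, F y + ⟪gradient F y, v⟫ + γ / 2 * ‖v‖ ^ 2 ≤ F (y + v) :=
    fun y v => grad_taylor_lower F γ hFd hgd (fun y w => hFlow y w) y v
  have hTu : ∀ y v, F (y + v) ≤ F y + ⟪gradient F y, v⟫ + Kc / 2 * ‖v‖ ^ 2 :=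
    fun y v => grad_taylor_upper F Kc hFd hgd (fun y w => hFup y w) y v
  -- PL inequality
  have hΔ0 : 0 ≤ F x - F xstar := sub_nonneg.mpr (hmin x)
  have hPL : 2 * γ * (F x - F xstar) ≤ ‖gradient F x‖ ^ 2 := by
    have h := hTl x (xstar - x)
    rw [show x + (xstar - x) = xstar by abel] at h
    have hcs : -(‖gradient F x‖ * ‖xstar - x‖) ≤ ⟪gradient F x, xstar - x⟫ := by
      have h2 := real_inner_le_norm (gradient F x) (-(xstar - x))
      rw [inner_neg_right, norm_neg] at h2
      linarith
    nlinarith [sq_nonneg (‖gradient F x‖ - γ * ‖xstar - x‖), hγ, hmin x]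
  -- descent lemma
  have hDesc : ∀ α : ℝ, F (x + α • p) ≤
      F x + α * ⟪p, gradient F x⟫ + Kc / 2 * (α ^ 2 * ‖p‖ ^ 2) := by
    intro α
    have h := hTu x (α • p)
    rw [real_inner_smul_right, norm_smul] at h
    simp only [Real.norm_eq_abs] at h
    rw [mul_pow, sq_abs] at h
    rw [real_inner_comm] at h
    linarith
  -- coordinates
  set μ : Fin d → ℝ := fun i => max (ev i) lam with hμdef
  set P : Fin d → ℝ := fun i => ⟪p, b i⟫ with hPdef
  set G : Fin d → ℝ := fun i => ⟪gradient F x, b i⟫ with hGdef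
  have hortho : ∀ i j, (⟪b i, b j⟫ : ℝ) = if i = j then 1 else 0 :=
    orthonormal_iff_ite.mp b.orthonormal
  have hb1 : ∀ i, ‖b i‖ = 1 := fun i => b.orthonormal.1 i
  have hbii : ∀ i, (⟪b i, b i⟫ : ℝ) = 1 := fun i => by rw [hortho i i]; simp
  have hHc : ∀ w i, (⟪Hhat w, b i⟫ : ℝ) = μ i * ⟪w, b i⟫ := by
    intro w i
    conv_lhs => rw [← b.sum_repr w]
    rw [map_sum, sum_inner]
    rw [Finset.sum_eq_single i]
    · rw [map_smul, hHhat i, b.repr_apply_apply]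
      rw [real_inner_smul_left, real_inner_smul_left, hbii i, real_inner_comm]
      ring
    · intro j _ hj
      rw [map_smul, hHhat j, real_inner_smul_left, real_inner_smul_left,
        hortho j i, if_neg hj]
      ring
    · intro h; exact absurd (Finset.mem_univ i) h
  have hexp : ∀ u w : EuclideanSpace ℝ (Fin d), (⟪u, w⟫ : ℝ) = ∑ i, ⟪u, b i⟫ * ⟪w, b i⟫ := by
    intro u w
    rw [← b.sum_inner_mul_inner u w]
    exact Finset.sum_congr rfl fun i _ => by rw [real_inner_comm (b i) w]
  have hpg : (⟪p, gradient F x⟫ : ℝ) = ∑ i, P i * G i := hexp p (gradient F x)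
  have hpHp : (⟪p, Hhat p⟫ : ℝ) = ∑ i, μ i * P i ^ 2 := by
    rw [real_inner_comm, hexp (Hhat p) p]
    exact Finset.sum_congr rfl fun i _ => by rw [hHc p i]; ring
  have hgn : ‖gradient F x‖ ^ 2 = ∑ i, G i ^ 2 := by
    rw [← real_inner_self_eq_norm_sq, hexp]
    exact Finset.sum_congr rfl fun i _ => by rw [sq]
  have hpn : ‖p‖ ^ 2 = ∑ i, P i ^ 2 := by
    rw [← real_inner_self_eq_norm_sq, hexp]
    exact Finset.sum_congr rfl fun i _ => by rw [sq]
  -- eigenvalue bounds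
  have hevlow : ∀ i, (1 - ε) * γ ≤ ev i := by
    intro i
    have h := hH (b i)
    rw [heig i, real_inner_smul_left, hbii i, hb1 i] at h
    simpa using h
  have hevup : ∀ i, ev i ≤ Khats := by
    intro i
    obtain ⟨Q, hQcard, hQsep, hQav⟩ := hKhats
    have h1 : (⟪((s : ℝ)⁻¹ • ∑ j, hess (f (S j)) x) (b i), b i⟫ : ℝ) = ev i := by
      rw [heig i, real_inner_smul_left, hbii i]; ring
    have h2 : (⟪((s : ℝ)⁻¹ • ∑ j, hess (f (S j)) x) (b i), b i⟫ : ℝ) =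
        (s : ℝ)⁻¹ * ∑ j, ⟪hess (f (S j)) x (b i), b i⟫ := by
      rw [ContinuousLinearMap.smul_apply, real_inner_smul_left,
        ContinuousLinearMap.sum_apply, sum_inner]
    have h3 : ∑ j, (⟪hess (f (S j)) x (b i), b i⟫ : ℝ) ≤ ∑ j, K (S j) := by
      apply Finset.sum_le_sum
      intro j _
      have := hfK (S j) x (b i)
      rwa [hb1 i, one_pow, mul_one] at this
    have h4 : ∑ j : Fin s, K (S j) = ∑ i2 ∈ Finset.univ.image S, K i2 :=
      (Finset.sum_image (fun a _ c _ h => hSinj h)).symm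
    have h5 : ∑ i2 ∈ Finset.univ.image S, K i2 ≤ ∑ i2 ∈ Q, K i2 :=
      sum_le_sum_sep K _ Q
        (by rw [Finset.card_image_of_injective _ hSinj, Finset.card_univ,
          Fintype.card_fin, hQcard]) hQsep
    have hs0 : (0 : ℝ) < s := by exact_mod_cast hs
    rw [← h1, h2, hQav, div_eq_inv_mul]
    apply mul_le_mul_of_nonneg_left _ (inv_nonneg.mpr hs0.le)
    calc ∑ j, (⟪hess (f (S j)) x (b i), b i⟫ : ℝ) ≤ ∑ j, K (S j) := h3
      _ = ∑ i2 ∈ Finset.univ.image S, K i2 := h4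
      _ ≤ ∑ i2 ∈ Q, K i2 := h5
  have hlam0 : 0 < lam := by
    obtain ⟨i0, h0⟩ := hlam
    have := hevlow i0
    nlinarith
  set M : ℝ := max Khats lam with hMdef
  have hlamM : lam ≤ M := le_max_right _ _
  have hM0 : 0 < M := lt_of_lt_of_le hlam0 hlamM
  have hμl : ∀ i, lam ≤ μ i := fun i => le_max_right _ _
  have hμu : ∀ i, μ i ≤ M := fun i =>
    max_le ((hevup i).trans (le_max_left _ _)) hlamM
  have hθsq : θ₁ ^ 2 * M ≤ lam / 4 := by
    rw [max_comm lam Khats] at hθ₁le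
    have hsqv : Real.sqrt (lam / M) * Real.sqrt (lam / M) = lam / M :=
      Real.mul_self_sqrt (by positivity)
    have h1 := mul_self_le_mul_self hθ₁0 hθ₁le
    have h4 : (1 / 2 * Real.sqrt (lam / M)) * (1 / 2 * Real.sqrt (lam / M)) =
        1 / 4 * (lam / M) := by
      rw [show (1 / 2 * Real.sqrt (lam / M)) * (1 / 2 * Real.sqrt (lam / M)) =
        1 / 4 * (Real.sqrt (lam / M) * Real.sqrt (lam / M)) by ring, hsqv]
    have h2 : θ₁ ^ 2 ≤ 1 / 4 * (lam / M) := by rw [sq]; linarith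
    have h5 := mul_le_mul_of_nonneg_right h2 hM0.le
    have h3 : 1 / 4 * (lam / M) * M = lam / 4 := by field_simp
    linarith
  -- residual bound
  have hres : ∑ i, (μ i * P i + G i) ^ 2 ≤ θ₁ ^ 2 * ∑ i, G i ^ 2 := by
    have hn2 : ‖Hhat p + gradient F x‖ ^ 2 ≤ θ₁ ^ 2 * ‖gradient F x‖ ^ 2 := by
      nlinarith [hp₁, norm_nonneg (Hhat p + gradient F x), norm_nonneg (gradient F x)]
    have hcoord : ‖Hhat p + gradient F x‖ ^ 2 = ∑ i, (μ i * P i + G i) ^ 2 := by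
      rw [← real_inner_self_eq_norm_sq, hexp]
      exact Finset.sum_congr rfl fun i _ => by
        rw [inner_add_left, hHc p i]; ring
    rw [← hcoord, ← hgn]
    exact hn2
  have hkey : (⟪p, gradient F x⟫ : ℝ) ≤ -(1 / (2 * M)) * ‖gradient F x‖ ^ 2 := by
    rw [hpg, hgn]
    exact core1 μ P G lam M θ₁ hlam0 hlamM hμl hμu hθsq hres
  constructor
  · -- Part 1: linear rate
    intro α hα hA
    have hc0 : 0 ≤ α * β * (1 / (2 * M)) := by positivity
    have e1 : α * β * ⟪p, gradient F x⟫ ≤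
        -(α * β * (1 / (2 * M)) * ‖gradient F x‖ ^ 2) := by
      nlinarith [mul_le_mul_of_nonneg_left hkey (by positivity : (0:ℝ) ≤ α * β)]
    have e2 : α * β * (1 / (2 * M)) * (2 * γ * (F x - F xstar)) ≤
        α * β * (1 / (2 * M)) * ‖gradient F x‖ ^ 2 :=
      mul_le_mul_of_nonneg_left hPL hc0
    have e3 : α * β * (1 / (2 * M)) * (2 * γ * (F x - F xstar)) =
        α * β * γ / M * (F x - F xstar) := by
      field_simp
    have e4 : (1 - α * β * γ / M) * (F x - F xstar) =
        (F x - F xstar) - α * β * γ / M * (F x - F xstar) := by ring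
    rw [hMdef] at e3 e4 ⊢
    linarith
  · -- Part 2: step sizes satisfying Armijo
    intro α hα hαle
    have hpHp_low : (1 - ε) * γ * ‖p‖ ^ 2 ≤ ⟪p, Hhat p⟫ := by
      rw [hpHp, hpn, Finset.mul_sum]
      apply Finset.sum_le_sum
      intro i _
      have h1 : (1 - ε) * γ ≤ μ i := le_trans (hevlow i) (le_max_left _ _)
      nlinarith [sq_nonneg (P i)]
    have hpg_up : (⟪p, gradient F x⟫ : ℝ) ≤ -((1 - θ₂) * ((1 - ε) * γ * ‖p‖ ^ 2)) := by
      have h1 : -(1 - θ₂) * ⟪p, Hhat p⟫ ≤ -((1 - θ₂) * ((1 - ε) * γ * ‖p‖ ^ 2)) := by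
        nlinarith [hpHp_low]
      exact hp₂.trans h1
    have hKα : α * Kc ≤ 2 * (1 - θ₂) * (1 - β) * (1 - ε) * γ := by
      have hKγ : (0 : ℝ) < Kc / γ := div_pos (lt_of_lt_of_le hγ hγK) hγ
      rw [le_div_iff₀ hKγ] at hαle
      have h1 : α * (Kc / γ) * γ = α * Kc := by field_simp
      nlinarith [hαle, hγ]
    have hD := hDesc α
    have e1 : α * (1 - β) * ⟪p, gradient F x⟫ ≤
        -(α * (1 - β) * ((1 - θ₂) * ((1 - ε) * γ * ‖p‖ ^ 2))) := by
      nlinarith [mul_le_mul_of_nonneg_left hpg_up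
        (mul_nonneg hα.le (by linarith : (0:ℝ) ≤ 1 - β))]
    have e2 : (α * ‖p‖ ^ 2) * (α * Kc) ≤
        (α * ‖p‖ ^ 2) * (2 * (1 - θ₂) * (1 - β) * (1 - ε) * γ) :=
      mul_le_mul_of_nonneg_left hKα (by positivity)
    nlinarith [e1, e2, hD]
end

section
/- Fix x ∈ ℝ^p and suppose ‖∇f_i(x)‖ ≤ G(x) for all i = 1,…,n. Let 0 < ε < 1 and 0 < δ < 1. Let i_1, …, i_s be i.i.d. indices drawn uniformly at random from {1,…,n} (sampling with replacement), and set g(x) = (1/s)∑_{j=1}^{s} ∇f_{i_j}(x). If s ≥ (G(x)²/ε²)(1 + √(8 ln(1/δ)))², then with probability at least 1 − δ, ‖∇F(x) − g(x)‖ ≤ ε. -/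
open Finset Real

namespace Stmt8Aux

noncomputable def fAvg {α : Type*} [Fintype α] (f : α → ℝ) : ℝ :=
  (∑ a, f a) / (Fintype.card α)

lemma fAvg_const {α : Type*} [Fintype α] [Nonempty α] (K : ℝ) :
    fAvg (fun _ : α => K) = K := by
  have h : (Fintype.card α : ℝ) ≠ 0 := by exact_mod_cast Fintype.card_ne_zero
  simp only [fAvg, Finset.sum_const, Finset.card_univ, nsmul_eq_mul]
  field_simp

lemma fAvg_add {α : Type*} [Fintype α] (f g : α → ℝ) :
    fAvg (fun a => f a + g a) = fAvg f + fAvg g := by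
  simp [fAvg, Finset.sum_add_distrib, add_div]

lemma fAvg_sub {α : Type*} [Fintype α] (f g : α → ℝ) :
    fAvg (fun a => f a - g a) = fAvg f - fAvg g := by
  simp [fAvg, Finset.sum_sub_distrib, sub_div]

lemma fAvg_mul_const {α : Type*} [Fintype α] (f : α → ℝ) (B : ℝ) :
    fAvg (fun a => f a * B) = fAvg f * B := by
  simp [fAvg, ← Finset.sum_mul, div_mul_eq_mul_div]

lemma fAvg_const_mul {α : Type*} [Fintype α] (f : α → ℝ) (B : ℝ) :
    fAvg (fun a => B * f a) = B * fAvg f := by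
  simp only [mul_comm B]; exact fAvg_mul_const f B

lemma fAvg_mono {α : Type*} [Fintype α] {f g : α → ℝ} (h : ∀ a, f a ≤ g a) :
    fAvg f ≤ fAvg g := by
  unfold fAvg
  gcongr with a ha
  exact h a

lemma fAvg_le {α : Type*} [Fintype α] [Nonempty α] {f : α → ℝ} {c : ℝ}
    (h : ∀ a, f a ≤ c) : fAvg f ≤ c := by
  calc fAvg f ≤ fAvg (fun _ : α => c) := fAvg_mono h
    _ = c := fAvg_const c

lemma abs_fAvg_le {α : Type*} [Fintype α] [Nonempty α] {f : α → ℝ} {c : ℝ}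
    (h : ∀ a, |f a| ≤ c) : |fAvg f| ≤ c := by
  rw [abs_le]
  constructor
  · have : ∀ a, -c ≤ f a := fun a => (abs_le.1 (h a)).1
    calc -c = fAvg (fun _ : α => -c) := (fAvg_const _).symm
      _ ≤ fAvg f := fAvg_mono this
  · exact fAvg_le fun a => (abs_le.1 (h a)).2

lemma fAvg_nonneg {α : Type*} [Fintype α] {f : α → ℝ} (h : ∀ a, 0 ≤ f a) :
    0 ≤ fAvg f :=
  div_nonneg (Finset.sum_nonneg fun a _ => h a) (Nat.cast_nonneg _)

lemma fAvg_sq_le {α : Type*} [Fintype α] [Nonempty α] (f : α → ℝ) :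
    (fAvg f) ^ 2 ≤ fAvg (fun a => (f a) ^ 2) := by
  have hN : (0 : ℝ) < Fintype.card α := by exact_mod_cast Fintype.card_pos
  have hcs := Finset.sum_mul_sq_le_sq_mul_sq Finset.univ f (fun _ => (1 : ℝ))
  simp only [mul_one, one_pow, Finset.sum_const, Finset.card_univ, nsmul_eq_mul] at hcs
  unfold fAvg
  rw [div_pow, div_le_div_iff₀ (by positivity) hN]
  nlinarith [mul_le_mul_of_nonneg_right hcs hN.le]


-- Hoeffding's lemma, finite averaged form
lemma avg_exp_le {α : Type*} [Fintype α] [Nonempty α] {w : α → ℝ} {c : ℝ}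
    (hc : 0 ≤ c) (h0 : fAvg w = 0) (hb : ∀ a, |w a| ≤ c) :
    fAvg (fun a => Real.exp (w a)) ≤ Real.exp (c ^ 2 / 2) := by
  rcases eq_or_lt_of_le hc with rfl | hc
  · have hw : ∀ a, w a = 0 := fun a => abs_eq_zero.1 (le_antisymm (hb a) (abs_nonneg _))
    have : (fun a : α => Real.exp (w a)) = fun _ : α => (1 : ℝ) := by
      funext a; rw [hw a, Real.exp_zero]
    rw [this, fAvg_const]
    simp
  · have key : ∀ a, Real.exp (w a) ≤ Real.cosh c + w a * (Real.sinh c / c) := by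
      intro a
      obtain ⟨h1, h2⟩ := abs_le.1 (hb a)
      have hθ1 : (0:ℝ) ≤ (c - w a) / (2 * c) := by
        apply div_nonneg (by linarith) (by linarith)
      have hθ2 : (0:ℝ) ≤ (c + w a) / (2 * c) := by
        apply div_nonneg (by linarith) (by linarith)
      have hθ : (c - w a) / (2 * c) + (c + w a) / (2 * c) = 1 := by
        field_simp; ring
      have hcvx := convexOn_exp.2 (Set.mem_univ (-c)) (Set.mem_univ c) hθ1 hθ2 hθ
      simp only [smul_eq_mul] at hcvx
      have harg : (c - w a) / (2 * c) * (-c) + (c + w a) / (2 * c) * c = w a := by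
        field_simp; ring
      rw [harg] at hcvx
      refine hcvx.trans (le_of_eq ?_)
      rw [Real.cosh_eq, Real.sinh_eq]
      field_simp
      ring
    calc fAvg (fun a => Real.exp (w a))
        ≤ fAvg (fun a => Real.cosh c + w a * (Real.sinh c / c)) := fAvg_mono key
      _ = Real.cosh c + fAvg w * (Real.sinh c / c) := by
          rw [fAvg_add (fun _ => Real.cosh c) (fun a => w a * (Real.sinh c / c)),
            fAvg_const, fAvg_mul_const]
      _ = Real.cosh c := by rw [h0]; ring
      _ ≤ Real.exp (c ^ 2 / 2) := Real.cosh_le_exp_half_sq c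

-- decomposition of sums over pi types on `Fin (s+1)`
lemma sum_succ_pi {n s : ℕ} (h : (Fin (s + 1) → Fin n) → ℝ) :
    ∑ ι, h ι = ∑ κ : Fin s → Fin n, ∑ a : Fin n, h (Fin.cons a κ) := by
  rw [← (Fin.consEquiv (fun _ : Fin (s+1) => Fin n)).sum_comp h]
  rw [Fintype.sum_prod_type]
  rw [Finset.sum_comm]
  rfl

lemma fAvg_succ_pi {n s : ℕ} (hn : 0 < n) (h : (Fin (s + 1) → Fin n) → ℝ) :
    fAvg h = fAvg (fun κ : Fin s → Fin n => fAvg (fun a : Fin n => h (Fin.cons a κ))) := by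
  have hcard : ∀ t : ℕ, (Fintype.card (Fin t → Fin n) : ℝ) = (n : ℝ) ^ t := by
    intro t; rw [Fintype.card_fun]; push_cast; simp
  have hn' : (n : ℝ) ≠ 0 := by positivity
  unfold fAvg
  rw [sum_succ_pi, hcard, hcard]
  simp only [Fintype.card_fin]
  conv_rhs => rw [← Finset.sum_div, div_div]
  rw [pow_succ, mul_comm]
lemma mgf_bound {n : ℕ} (hn : 0 < n) {c : ℝ} (hc : 0 ≤ c) :
    ∀ (s : ℕ) (ψ : (Fin s → Fin n) → ℝ),
      (∀ ι (j : Fin s) (a : Fin n), |ψ ι - ψ (Function.update ι j a)| ≤ c) →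
      fAvg (fun ι => Real.exp (ψ ι - fAvg ψ)) ≤ Real.exp (s * (c ^ 2 / 2)) := by
  haveI : NeZero n := ⟨hn.ne'⟩
  intro s
  induction s with
  | zero =>
      intro ψ _
      have huniq : (Finset.univ : Finset (Fin 0 → Fin n)) = {fun i => i.elim0} :=
        Finset.eq_singleton_iff_unique_mem.2 ⟨Finset.mem_univ _,
          fun g _ => funext fun i => i.elim0⟩
      have hcard : (Fintype.card (Fin 0 → Fin n)) = 1 := by
        rw [Fintype.card_fun]; simp
      have havg : ∀ φ : (Fin 0 → Fin n) → ℝ, fAvg φ = φ (fun i => i.elim0) := by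
        intro φ; unfold fAvg; rw [huniq, Finset.sum_singleton, hcard]; simp
      rw [havg, havg ψ]
      simp
  | succ s IH =>
      intro ψ hbd
      set g : (Fin s → Fin n) → ℝ := fun κ => fAvg (fun a => ψ (Fin.cons a κ)) with hg
      have hgbd : ∀ κ (j : Fin s) (b : Fin n), |g κ - g (Function.update κ j b)| ≤ c := by
        intro κ j b
        rw [hg]
        simp only
        rw [fAvg_sub (fun a => ψ (Fin.cons a κ)) (fun a => ψ (Fin.cons a (Function.update κ j b)))
          |>.symm]
        apply abs_fAvg_le
        intro a
        rw [show (Fin.cons a (Function.update κ j b) : Fin (s+1) → Fin n)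
            = Function.update (Fin.cons a κ : Fin (s+1) → Fin n) j.succ b from by
          funext j'
          refine Fin.cases ?_ ?_ j'
          · rw [Function.update_of_ne (Fin.succ_ne_zero j).symm]
            simp
          · intro i
            by_cases h : i = j
            · subst h; simp
            · rw [Function.update_of_ne ((Fin.succ_injective _).ne h)]
              simp [Function.update_of_ne h]]
        exact hbd _ _ _
      have havg : fAvg g = fAvg ψ := (fAvg_succ_pi hn ψ).symm
      have hstep : ∀ κ : Fin s → Fin n,
          fAvg (fun a => Real.exp (ψ (Fin.cons a κ) - fAvg ψ))
            ≤ Real.exp (g κ - fAvg ψ) * Real.exp (c ^ 2 / 2) := by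
        intro κ
        have hsplit : (fun a : Fin n => Real.exp (ψ (Fin.cons a κ) - fAvg ψ))
            = fun a => Real.exp (ψ (Fin.cons a κ) - g κ) * Real.exp (g κ - fAvg ψ) := by
          funext a; rw [← Real.exp_add]; ring_nf
        rw [hsplit, fAvg_mul_const]
        have h0 : fAvg (fun a : Fin n => ψ (Fin.cons a κ) - g κ) = 0 := by
          rw [show (fun a : Fin n => ψ (Fin.cons a κ) - g κ)
              = fun a : Fin n => ψ (Fin.cons a κ) - (fun _ : Fin n => g κ) a from rfl]
          rw [fAvg_sub, fAvg_const, hg]; ring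
        have hb : ∀ a : Fin n, |ψ (Fin.cons a κ) - g κ| ≤ c := by
          intro a
          have : ψ (Fin.cons a κ) - g κ
              = fAvg (fun b : Fin n => ψ (Fin.cons a κ) - ψ (Fin.cons b κ)) := by
            rw [fAvg_sub (fun _ : Fin n => ψ (Fin.cons a κ)) (fun b => ψ (Fin.cons b κ)),
              fAvg_const, hg]
          rw [this]
          apply abs_fAvg_le
          intro b
          rw [show (Fin.cons b κ : Fin (s+1) → Fin n)
              = Function.update (Fin.cons a κ : Fin (s+1) → Fin n) 0 b from by
            funext j'
            refine Fin.cases ?_ ?_ j'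
            · simp
            · intro i
              rw [Function.update_of_ne (Fin.succ_ne_zero i)]
              simp]
          exact hbd _ _ _
        have := avg_exp_le hc h0 hb
        calc fAvg (fun a => Real.exp (ψ (Fin.cons a κ) - g κ)) * Real.exp (g κ - fAvg ψ)
            ≤ Real.exp (c ^ 2 / 2) * Real.exp (g κ - fAvg ψ) := by
              apply mul_le_mul_of_nonneg_right this (Real.exp_nonneg _)
          _ = Real.exp (g κ - fAvg ψ) * Real.exp (c ^ 2 / 2) := by ring
      calc fAvg (fun ι => Real.exp (ψ ι - fAvg ψ))
          = fAvg (fun κ : Fin s → Fin n =>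
              fAvg (fun a : Fin n => Real.exp (ψ (Fin.cons a κ) - fAvg ψ))) :=
            fAvg_succ_pi hn _
        _ ≤ fAvg (fun κ : Fin s → Fin n =>
              Real.exp (g κ - fAvg ψ) * Real.exp (c ^ 2 / 2)) := fAvg_mono hstep
        _ = fAvg (fun κ : Fin s → Fin n => Real.exp (g κ - fAvg g)) * Real.exp (c ^ 2 / 2) := by
            rw [fAvg_mul_const, havg]
        _ ≤ Real.exp (s * (c ^ 2 / 2)) * Real.exp (c ^ 2 / 2) := by
            apply mul_le_mul_of_nonneg_right (IH g hgbd) (Real.exp_nonneg _)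
        _ = Real.exp ((s + 1 : ℕ) * (c ^ 2 / 2)) := by
            rw [← Real.exp_add]; push_cast; ring_nf
lemma var_bound {n : ℕ} (hn : 0 < n) {E : Type*} [NormedAddCommGroup E] [InnerProductSpace ℝ E]
    (W : Fin n → E) (h0 : ∑ i, W i = 0) :
    ∀ s : ℕ, fAvg (fun ι : Fin s → Fin n => ‖∑ j, W (ι j)‖ ^ 2)
      ≤ s * fAvg (fun i => ‖W i‖ ^ 2) := by
  haveI : NeZero n := ⟨hn.ne'⟩
  intro s
  induction s with
  | zero => simp [fAvg]
  | succ s IH =>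
      have key : ∀ κ : Fin s → Fin n,
          fAvg (fun a : Fin n => ‖∑ j : Fin (s+1), W ((Fin.cons a κ : Fin (s+1) → Fin n) j)‖ ^ 2)
            = fAvg (fun i => ‖W i‖ ^ 2) + ‖∑ j : Fin s, W (κ j)‖ ^ 2 := by
        intro κ
        have hsum : ∀ a : Fin n, ∑ j : Fin (s+1), W ((Fin.cons a κ : Fin (s+1) → Fin n) j)
            = W a + ∑ j : Fin s, W (κ j) := by
          intro a
          rw [Fin.sum_univ_succ]
          simp
        have hexp : (fun a : Fin n => ‖∑ j : Fin (s+1), W ((Fin.cons a κ : Fin (s+1) → Fin n) j)‖ ^ 2)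
            = fun a : Fin n => ‖W a‖ ^ 2
                + (2 * (inner ℝ (W a) (∑ j : Fin s, W (κ j)) : ℝ) + ‖∑ j : Fin s, W (κ j)‖ ^ 2) := by
          funext a
          rw [hsum a, norm_add_sq_real]
          ring
        rw [hexp, fAvg_add, fAvg_add]
        have hmid : fAvg (fun a : Fin n => 2 * (inner ℝ (W a) (∑ j : Fin s, W (κ j)) : ℝ)) = 0 := by
          rw [fAvg_const_mul]
          unfold fAvg
          rw [← sum_inner, h0, inner_zero_left]
          simp
        rw [hmid, fAvg_const]
        ring
      calc fAvg (fun ι : Fin (s+1) → Fin n => ‖∑ j, W (ι j)‖ ^ 2)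
          = fAvg (fun κ : Fin s → Fin n =>
              fAvg (fun a : Fin n => ‖∑ j : Fin (s+1), W ((Fin.cons a κ : Fin (s+1) → Fin n) j)‖ ^ 2)) :=
            fAvg_succ_pi hn _
        _ = fAvg (fun κ : Fin s → Fin n =>
              fAvg (fun i => ‖W i‖ ^ 2) + ‖∑ j : Fin s, W (κ j)‖ ^ 2) := by
            congr 1; funext κ; exact key κ
        _ = fAvg (fun i => ‖W i‖ ^ 2)
              + fAvg (fun κ : Fin s → Fin n => ‖∑ j : Fin s, W (κ j)‖ ^ 2) := by
            rw [fAvg_add, fAvg_const]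
        _ ≤ fAvg (fun i => ‖W i‖ ^ 2) + s * fAvg (fun i => ‖W i‖ ^ 2) := by linarith [IH]
        _ = ((s : ℕ) + 1 : ℝ) * fAvg (fun i => ‖W i‖ ^ 2) := by ring
        _ = ((s + 1 : ℕ) : ℝ) * fAvg (fun i => ‖W i‖ ^ 2) := by push_cast; ring
end Stmt8Aux

open Stmt8Aux MeasureTheory ProbabilityTheory

set_option maxHeartbeats 1000000 in
theorem stmt_8 {d n s : ℕ} (hn : 0 < n) (hs : 0 < s)
    {Ω : Type*} [MeasurableSpace Ω] (μ : Measure Ω) [IsProbabilityMeasure μ]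
    (f : Fin n → EuclideanSpace ℝ (Fin d) → ℝ)
    (F : EuclideanSpace ℝ (Fin d) → ℝ)
    (G ε δ : ℝ) (x : EuclideanSpace ℝ (Fin d))
    (I : Ω → (Fin s → Fin n)) (hI : Measurable I)
    -- each fᵢ is continuously differentiable
    (hf : ∀ i, ContDiff ℝ 1 (f i))
    -- `F = (1/n) ∑ fᵢ`
    (hF : ∀ y, F y = (1 / n : ℝ) * ∑ i, f i y)
    -- `‖∇fᵢ(x)‖ ≤ G(x)` for all `i`
    (hG : ∀ i, ‖gradient (f i) x‖ ≤ G)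
    (hε : 0 < ε) (hε1 : ε < 1) (hδ : 0 < δ) (hδ1 : δ < 1)
    -- the indices `i_1, …, i_s` are i.i.d. uniform over `{1,…,n}`
    (hlaw : Measure.map I μ = uniformOn (Set.univ : Set (Fin s → Fin n)))
    -- sample-size requirement `s ≥ (G(x)²/ε²)(1 + √(8 ln(1/δ)))²`
    (hsize : (s : ℝ) ≥ G ^ 2 / ε ^ 2 * (1 + Real.sqrt (8 * Real.log (1 / δ))) ^ 2) :
    -- with probability at least `1 - δ`, `‖∇F(x) - g(x)‖ ≤ ε`
    ENNReal.ofReal (1 - δ) ≤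
      μ {ω | ‖gradient F x - (s : ℝ)⁻¹ • ∑ j, gradient (f (I ω j)) x‖ ≤ ε} := by
  classical
  haveI : NeZero n := ⟨hn.ne'⟩
  set V : Fin n → EuclideanSpace ℝ (Fin d) := fun i => gradient (f i) x with hV
  have hnR : (0:ℝ) < n := by exact_mod_cast hn
  have hsR : (0:ℝ) < s := by exact_mod_cast hs
  -- gradient of F
  have hM : gradient F x = (1/n : ℝ) • ∑ i, V i := by
    have hfd : ∀ i : Fin n,
        HasFDerivAt (f i) (InnerProductSpace.toDual ℝ _ (V i)) x :=
      fun i => hasGradientAt_iff_hasFDerivAt.1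
        (((hf i).differentiable one_ne_zero).differentiableAt.hasGradientAt)
    have hsum : HasFDerivAt (fun y => ∑ i, f i y)
        (∑ i, InnerProductSpace.toDual ℝ _ (V i)) x :=
      HasFDerivAt.fun_sum (fun i _ => hfd i)
    have hFd : HasFDerivAt F
        ((1/n : ℝ) • ∑ i, InnerProductSpace.toDual ℝ _ (V i)) x := by
      have hFeq : F = fun y => (1/n : ℝ) * ∑ i, f i y := funext hF
      rw [hFeq]
      exact hsum.const_mul _
    have htd : (1/n : ℝ) • ∑ i, InnerProductSpace.toDual ℝ _ (V i)
        = InnerProductSpace.toDual ℝ _ ((1/n : ℝ) • ∑ i, V i) := by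
      rw [_root_.map_smul, _root_.map_sum]
    rw [htd] at hFd
    have := (hasFDerivAt_iff_hasGradientAt.1 hFd).gradient
    rwa [LinearIsometryEquiv.symm_apply_apply] at this
  set M : EuclideanSpace ℝ (Fin d) := (1/n : ℝ) • ∑ i, V i with hMdef
  have hG0 : 0 ≤ G := le_trans (norm_nonneg _) (hG ⟨0, hn⟩)
  set W : Fin n → EuclideanSpace ℝ (Fin d) := fun i => V i - M with hW
  have hWsum : ∑ i, W i = 0 := by
    rw [hW]
    rw [Finset.sum_sub_distrib, Finset.sum_const, Finset.card_univ, Fintype.card_fin]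
    rw [hMdef, ← Nat.cast_smul_eq_nsmul (R := ℝ), smul_smul]
    rw [show (n : ℝ) * (1/n : ℝ) = 1 by field_simp]
    rw [one_smul, sub_self]
  set ψ : (Fin s → Fin n) → ℝ := fun ι => ‖∑ j, W (ι j)‖ with hψ
  -- event identity
  have hkey : ∀ ι : Fin s → Fin n,
      (‖M - (s : ℝ)⁻¹ • ∑ j, V (ι j)‖ ≤ ε ↔ ψ ι ≤ s * ε) := by
    intro ι
    have h1 : ∑ j, W (ι j) = (∑ j, V (ι j)) - (s:ℝ) • M := by
      rw [hW]
      rw [Finset.sum_sub_distrib, Finset.sum_const, Finset.card_univ, Fintype.card_fin,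
        ← Nat.cast_smul_eq_nsmul (R := ℝ)]
    have h2 : M - (s:ℝ)⁻¹ • ∑ j, V (ι j) = -((s:ℝ)⁻¹ • ∑ j, W (ι j)) := by
      rw [h1, smul_sub, smul_smul, inv_mul_cancel₀ hsR.ne', one_smul, neg_sub]
    rw [h2, norm_neg, norm_smul, Real.norm_eq_abs, abs_of_pos (by positivity)]
    rw [inv_mul_le_iff₀ hsR]
  -- rewrite goal set
  have hsetV : ∀ ω j, gradient (f (I ω j)) x = V (I ω j) := fun _ _ => rfl
  have hgoalset : {ω | ‖gradient F x - (s : ℝ)⁻¹ • ∑ j, gradient (f (I ω j)) x‖ ≤ ε}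
      = I ⁻¹' {ι : Fin s → Fin n | ψ ι ≤ s * ε} := by
    ext ω
    simp only [Set.mem_setOf_eq, Set.mem_preimage, hM, hsetV]
    exact hkey (I ω)
  -- measure of the event via the uniform law
  set A : Set (Fin s → Fin n) := {ι | ψ ι ≤ s * ε} with hA
  have hAmeas : MeasurableSet A := A.to_countable.measurableSet
  have hμ : μ {ω | ‖gradient F x - (s : ℝ)⁻¹ • ∑ j, gradient (f (I ω j)) x‖ ≤ ε}
      = uniformOn (Set.univ : Set (Fin s → Fin n)) A := by
    rw [hgoalset, ← Measure.map_apply hI hAmeas, hlaw]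
  rw [hμ, uniformOn_univ]
  set Afin : Finset (Fin s → Fin n) := Finset.univ.filter (fun ι => ψ ι ≤ s * ε) with hAfin
  have hAco : A = ↑Afin := by ext ι; simp [hA, hAfin]
  have hcountA : Measure.count A = (Afin.card : ENNReal) := by
    rw [hAco, Measure.count_apply_finset]
  rw [hcountA]
  set N : ℕ := Fintype.card (Fin s → Fin n) with hN
  have hNpos : 0 < N := Fintype.card_pos
  have hNR : (0:ℝ) < N := by exact_mod_cast hNpos
  -- the main counting bound
  have main : (1 - δ) * N ≤ (Afin.card : ℝ) := by
    set T : Finset (Fin s → Fin n) := Finset.univ.filter (fun ι => ¬ (ψ ι ≤ s * ε)) with hT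
    have hsplit : Afin.card + T.card = N := by
      rw [hAfin, hT, Finset.card_filter_add_card_filter_not, Finset.card_univ]
    have hTbound : (T.card : ℝ) ≤ δ * N := by
      rcases eq_or_lt_of_le hG0 with hGeq | hGpos
      · -- degenerate case G = 0 : all gradients vanish
        have hV0 : ∀ i, V i = 0 := by
          intro i
          have h := hG i
          rw [← hGeq] at h
          exact norm_le_zero_iff.1 h
        have hVs : ∑ i, V i = 0 := Finset.sum_eq_zero fun i _ => hV0 i
        have hψ0 : ∀ ι : Fin s → Fin n, ψ ι = 0 := by
          intro ι
          have hWz : ∀ j : Fin s, W (ι j) = 0 := by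
            intro j
            rw [hW]
            simp only
            rw [hV0, hMdef, hVs, smul_zero, sub_self]
          rw [hψ]
          simp only
          rw [Finset.sum_eq_zero fun j _ => hWz j, norm_zero]
        have hT0 : T = ∅ := by
          rw [hT, Finset.filter_eq_empty_iff]
          intro ι _
          rw [not_not, hψ0]
          positivity
        rw [hT0]
        simp only [Finset.card_empty, Nat.cast_zero]
        positivity
      · -- Chernoff / McDiarmid bound
        set L := Real.log (1 / δ) with hLdef
        have hL : 0 < L := Real.log_pos (by rw [lt_div_iff₀ hδ]; linarith)
        set R := Real.sqrt (8 * L) with hRdef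
        have hR : 0 < R := Real.sqrt_pos.2 (by positivity)
        have hR2 : R ^ 2 = 8 * L := Real.sq_sqrt (by positivity)
        have hsq : Real.sqrt s ^ 2 = (s:ℝ) := Real.sq_sqrt hsR.le
        have hsqpos : 0 < Real.sqrt s := Real.sqrt_pos.2 hsR
        -- bounded differences of ψ
        have hψbd : ∀ ι (j : Fin s) (a : Fin n), |ψ ι - ψ (Function.update ι j a)| ≤ 2 * G := by
          intro ι j a
          have hupd : (fun j' => W (Function.update ι j a j'))
              = Function.update (fun j' => W (ι j')) j (W a) := by
            funext j'
            by_cases h : j' = j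
            · subst h; simp
            · simp [Function.update_of_ne h]
          have hsum2 : ∑ j', W (Function.update ι j a j')
              = W a + ∑ j' ∈ Finset.univ \ {j}, W (ι j') := by
            calc ∑ j', W (Function.update ι j a j')
                = ∑ j', Function.update (fun j' => W (ι j')) j (W a) j' := by rw [hupd]
              _ = W a + ∑ j' ∈ Finset.univ \ {j}, W (ι j') :=
                  Finset.sum_update_of_mem (Finset.mem_univ j) _ _
          have hsum1 : ∑ j', W (ι j') = W (ι j) + ∑ j' ∈ Finset.univ \ {j}, W (ι j') :=
            Finset.sum_eq_add_sum_sdiff_singleton_of_mem (Finset.mem_univ j) _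
          calc |ψ ι - ψ (Function.update ι j a)|
              ≤ ‖(∑ j', W (ι j')) - ∑ j', W (Function.update ι j a j')‖ :=
                abs_norm_sub_norm_le _ _
            _ = ‖W (ι j) - W a‖ := by rw [hsum1, hsum2]; congr 1; abel
            _ = ‖V (ι j) - V a‖ := by
                rw [hW]
                simp only
                congr 1
                abel
            _ ≤ ‖V (ι j)‖ + ‖V a‖ := norm_sub_le _ _
            _ ≤ G + G := add_le_add (hG _) (hG _)
            _ = 2 * G := by ring
        -- second moment bound
        have hVsum : (n:ℝ) • M = ∑ i, V i := by
          rw [hMdef, smul_smul]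
          rw [show (n:ℝ) * (1/n : ℝ) = 1 by field_simp]
          rw [one_smul]
        have hσ : fAvg (fun i => ‖W i‖ ^ 2) ≤ G ^ 2 := by
          have hpt : ∀ i, ‖W i‖^2 = ‖V i‖^2 - 2 * (inner ℝ (V i) M : ℝ) + ‖M‖^2 := by
            intro i
            rw [hW]
            exact norm_sub_sq_real _ _
          have hinner : ∑ i, (inner ℝ (V i) M : ℝ) = (n:ℝ) * ‖M‖^2 := by
            rw [← sum_inner, ← hVsum, real_inner_smul_left, real_inner_self_eq_norm_sq]
          have hsum3 : ∑ i, ‖W i‖ ^ 2 = (∑ i, ‖V i‖ ^ 2) - (n:ℝ) * ‖M‖ ^ 2 := by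
            calc ∑ i, ‖W i‖ ^ 2
                = ∑ i, (‖V i‖^2 - 2 * (inner ℝ (V i) M : ℝ) + ‖M‖^2) := by
                  exact Finset.sum_congr rfl fun i _ => hpt i
              _ = (∑ i, ‖V i‖^2) - 2 * (∑ i, (inner ℝ (V i) M : ℝ)) + (n:ℝ) * ‖M‖^2 := by
                  rw [Finset.sum_add_distrib, Finset.sum_sub_distrib, ← Finset.mul_sum,
                    Finset.sum_const, Finset.card_univ, Fintype.card_fin, nsmul_eq_mul]
              _ = (∑ i, ‖V i‖ ^ 2) - (n:ℝ) * ‖M‖ ^ 2 := by rw [hinner]; ring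
          have hVbound : ∑ i, ‖V i‖^2 ≤ (n:ℝ) * G^2 := by
            calc ∑ i, ‖V i‖^2 ≤ ∑ _i : Fin n, G^2 :=
                  Finset.sum_le_sum fun i _ =>
                    pow_le_pow_left₀ (norm_nonneg (V i)) (hG i) 2
              _ = (n:ℝ) * G^2 := by
                  rw [Finset.sum_const, Finset.card_univ, Fintype.card_fin, nsmul_eq_mul]
          unfold fAvg
          rw [Fintype.card_fin, div_le_iff₀ hnR]
          rw [hsum3]
          have hM2 : (0:ℝ) ≤ (n:ℝ) * ‖M‖^2 := by positivity
          linarith [hVbound]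
        -- mean bound
        have hmean : fAvg ψ ≤ Real.sqrt s * G := by
          have h1 : (fAvg ψ)^2 ≤ fAvg (fun ι => (ψ ι)^2) := fAvg_sq_le ψ
          have h2 : fAvg (fun ι : Fin s → Fin n => (ψ ι)^2) ≤ s * G^2 := by
            calc fAvg (fun ι : Fin s → Fin n => (ψ ι)^2)
                = fAvg (fun ι : Fin s → Fin n => ‖∑ j, W (ι j)‖^2) := rfl
              _ ≤ s * fAvg (fun i => ‖W i‖^2) := var_bound hn W hWsum s
              _ ≤ s * G^2 := mul_le_mul_of_nonneg_left hσ hsR.le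
          have h3 : 0 ≤ fAvg ψ := fAvg_nonneg fun ι => norm_nonneg _
          calc fAvg ψ = Real.sqrt ((fAvg ψ)^2) := (Real.sqrt_sq h3).symm
            _ ≤ Real.sqrt ((s:ℝ) * G^2) := Real.sqrt_le_sqrt (le_trans h1 h2)
            _ = Real.sqrt s * G := by
                rw [Real.sqrt_mul hsR.le, Real.sqrt_sq hG0]
        -- sample-size consequence
        have hsize2 : G * (1 + R) ≤ Real.sqrt s * ε := by
          have h1 : (G*(1+R))^2 ≤ (Real.sqrt s * ε)^2 := by
            rw [mul_pow, mul_pow, hsq]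
            have h1a : G^2/ε^2*(1+R)^2 ≤ (s:ℝ) := hsize
            have h1b := mul_le_mul_of_nonneg_right h1a (sq_nonneg ε)
            have h1c : G^2/ε^2*(1+R)^2*ε^2 = G^2*(1+R)^2 := by
              field_simp
            linarith [h1b, h1c.symm.le, h1c.le]
          have h2 : (0:ℝ) ≤ G * (1+R) := by positivity
          calc G * (1+R) = Real.sqrt ((G*(1+R))^2) := (Real.sqrt_sq h2).symm
            _ ≤ Real.sqrt ((Real.sqrt s * ε)^2) := Real.sqrt_le_sqrt h1
            _ = Real.sqrt s * ε := Real.sqrt_sq (by positivity)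
        set t := s * ε - fAvg ψ with htdef
        have ht_low : Real.sqrt s * G * R ≤ t := by
          have h4 : Real.sqrt s * (G * (1+R)) ≤ Real.sqrt s * (Real.sqrt s * ε) :=
            mul_le_mul_of_nonneg_left hsize2 hsqpos.le
          have h5 : Real.sqrt s * (Real.sqrt s * ε) = s * ε := by
            rw [← mul_assoc, Real.mul_self_sqrt hsR.le]
          have h6 : Real.sqrt s * (G * (1+R)) = Real.sqrt s * G + Real.sqrt s * G * R := by
            ring
          rw [htdef]
          linarith [h4, h5, hmean, h6]
        have ht : 0 < t := lt_of_lt_of_le (by positivity) ht_low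
        set lam := t / (s * (2*G)^2) with hlam
        have hlampos : 0 < lam := div_pos ht (by positivity)
        -- apply the MGF bound
        have hbd' : ∀ ι (j : Fin s) (a : Fin n),
            |(fun ι => lam * ψ ι) ι - (fun ι => lam * ψ ι) (Function.update ι j a)|
              ≤ lam * (2*G) := by
          intro ι j a
          simp only
          rw [← mul_sub, abs_mul, abs_of_pos hlampos]
          exact mul_le_mul_of_nonneg_left (hψbd ι j a) hlampos.le
        have hmgf := mgf_bound hn (c := lam * (2*G)) (by positivity) s
          (fun ι => lam * ψ ι) hbd'
        have havg' : fAvg (fun ι : Fin s → Fin n => lam * ψ ι) = lam * fAvg ψ :=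
          fAvg_const_mul ψ lam
        rw [havg'] at hmgf
        -- Chernoff counting
        have hsum_le : (T.card : ℝ) * Real.exp (lam * t)
            ≤ (N:ℝ) * Real.exp (s * ((lam*(2*G))^2/2)) := by
          have e1 : (T.card : ℝ) * Real.exp (lam * t)
              = ∑ _ι ∈ T, Real.exp (lam * (s*ε) - lam * fAvg ψ) := by
            rw [Finset.sum_const, nsmul_eq_mul]
            congr 2
            rw [htdef]; ring
          rw [e1]
          have e2 : ∑ ι ∈ T, Real.exp (lam * (s*ε) - lam * fAvg ψ)
              ≤ ∑ ι ∈ T, Real.exp (lam * ψ ι - lam * fAvg ψ) := by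
            apply Finset.sum_le_sum
            intro ι hι
            apply Real.exp_le_exp.2
            have hmem : ¬ ψ ι ≤ s * ε := by
              rw [hT, Finset.mem_filter] at hι
              exact hι.2
            have hgt : s * ε < ψ ι := lt_of_not_ge hmem
            have := mul_le_mul_of_nonneg_left hgt.le hlampos.le
            linarith
          refine e2.trans ?_
          have e3 : ∑ ι ∈ T, Real.exp (lam * ψ ι - lam * fAvg ψ)
              ≤ ∑ ι : Fin s → Fin n, Real.exp (lam * ψ ι - lam * fAvg ψ) :=
            Finset.sum_le_sum_of_subset_of_nonneg (Finset.subset_univ T)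
              (fun _ _ _ => (Real.exp_pos _).le)
          refine e3.trans ?_
          have e4 : ∑ ι : Fin s → Fin n, Real.exp (lam * ψ ι - lam * fAvg ψ)
              = (N:ℝ) * fAvg (fun ι : Fin s → Fin n =>
                  Real.exp (lam * ψ ι - lam * fAvg ψ)) := by
            unfold fAvg
            rw [← hN]
            field_simp
            congr 1; funext ι; congr 1; ring
          rw [e4]
          exact mul_le_mul_of_nonneg_left hmgf (Nat.cast_nonneg _)
        have hexp_bound : Real.exp (s * ((lam*(2*G))^2/2)) / Real.exp (lam*t) ≤ δ := by
          rw [← Real.exp_sub]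
          have harith : s * ((lam*(2*G))^2/2) - lam*t = - (t^2 / (2 * ((s:ℝ) * (2*G)^2))) := by
            rw [hlam]
            field_simp
            ring
          rw [harith]
          have hδeq : δ = Real.exp (-L) := by
            rw [hLdef, Real.exp_neg, Real.exp_log (by positivity), one_div, inv_inv]
          rw [hδeq]
          apply Real.exp_le_exp.2
          have hden : (0:ℝ) < 2 * ((s:ℝ) * (2*G)^2) := by positivity
          rw [neg_le_neg_iff, le_div_iff₀ hden]
          have hsb : (Real.sqrt s * G * R)^2 = (s:ℝ) * G^2 * (8*L) := by
            rw [mul_pow, mul_pow, hsq, hR2]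
          have hBpos : 0 < Real.sqrt s * G * R := mul_pos (mul_pos hsqpos hGpos) hR
          have htB : (Real.sqrt s * G * R)^2 ≤ t^2 :=
            pow_le_pow_left₀ hBpos.le ht_low 2
          calc L * (2 * ((s:ℝ) * (2*G)^2)) = (s:ℝ) * G^2 * (8*L) := by ring
            _ = (Real.sqrt s * G * R)^2 := hsb.symm
            _ ≤ t^2 := htB
        calc (T.card : ℝ)
            ≤ (N:ℝ) * Real.exp (s * ((lam*(2*G))^2/2)) / Real.exp (lam*t) := by
              rw [le_div_iff₀ (Real.exp_pos _)]
              exact hsum_le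
          _ = (N:ℝ) * (Real.exp (s * ((lam*(2*G))^2/2)) / Real.exp (lam*t)) := by ring
          _ ≤ (N:ℝ) * δ := mul_le_mul_of_nonneg_left hexp_bound (Nat.cast_nonneg _)
          _ = δ * N := by ring
    have hcards : (Afin.card : ℝ) + (T.card : ℝ) = (N:ℝ) := by exact_mod_cast hsplit
    have hexpand : (1 - δ) * (N:ℝ) = (N:ℝ) - δ * (N:ℝ) := by ring
    linarith [hTbound]
  have h1 : (1 : ℝ) - δ ≤ (Afin.card : ℝ) / (N : ℝ) := by
    rw [le_div_iff₀ hNR]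
    exact main
  calc ENNReal.ofReal (1 - δ) ≤ ENNReal.ofReal ((Afin.card : ℝ) / (N : ℝ)) :=
        ENNReal.ofReal_le_ofReal h1
    _ = (Afin.card : ENNReal) / (N : ENNReal) := by
        rw [ENNReal.ofReal_div_of_pos hNR, ENNReal.ofReal_natCast, ENNReal.ofReal_natCast]
end
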